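/- arXiv:0706.2707 — 3 statements merged into one kernel-verified Lean document; each statement's English description precedes it below -/
import Mathlib

section
/- Let q and r be compositions of n, and for each i ∈ {1,…,n} let t_i be the number of components of r equal to i. Then the number of matrices Z ∈ S(q,r) with w(Z) = q is divisible by t_1!·t_2!·…·t_n!, and moreover this number is unchanged if r is replaced by any composition r′ with r′ ≈ r. -/
open scoped Classical

set_option synthInstance.maxHeartbeats 1000000
set_option maxHeartbeats 1000000

noncomputable section

/-- The group algebra `F_p[S_n]`. -/
abbrev GroupAlg (n p : ℕ) : Type := MonoidAlgebra (ZMod p) (Equiv.Perm (Fin n))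

/-- The descent set of a permutation `σ` of `{1,…,n}` (1-based positions):
`k ∈ {1,…,n-1}` is a descent if `σ(k) > σ(k+1)`.  (With 0-based `Fin n` indices this
compares the images at indices `k-1` and `k`.) -/
def descSet {n : ℕ} (σ : Equiv.Perm (Fin n)) : Set ℕ :=
  {k | ∃ h : k < n, 0 < k ∧ σ ⟨k, h⟩ < σ ⟨k - 1, by omega⟩}

/-- The set of proper partial sums `{a_1, a_1+a_2, …, a_1+⋯+a_{s-1}}` of a composition. -/
def properPartialSums {n : ℕ} (q : Composition n) : Set ℕ :=
  {m | ∃ i : ℕ, 0 < i ∧ i < q.length ∧ m = q.sizeUpTo i}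

/-- `B̄_q`: the sum of all permutations whose descent set is contained in the set of
proper partial sums of `q`. -/
def Bel (n p : ℕ) (q : Composition n) : GroupAlg n p :=
  ∑ σ ∈ Finset.univ.filter
      (fun σ : Equiv.Perm (Fin n) => descSet σ ⊆ properPartialSums q),
    MonoidAlgebra.of (ZMod p) (Equiv.Perm (Fin n)) σ

/-- The p-modular descent algebra `Σ(n,p)`, as a subalgebra of the group algebra. -/
def descentAlgebra (n p : ℕ) : Subalgebra (ZMod p) (GroupAlg n p) :=
  Algebra.adjoin (ZMod p) (Set.range (Bel n p))

/-- `B̄_q` as an element of `Σ(n,p)`. -/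
def BelS (n p : ℕ) (q : Composition n) : descentAlgebra n p :=
  ⟨Bel n p q, Algebra.subset_adjoin ⟨q, rfl⟩⟩

/-- The Jacobson radical `R(n,p)` of `Σ(n,p)`. -/
def descentRadical (n p : ℕ) : Ideal (descentAlgebra n p) :=
  (⊥ : Ideal (descentAlgebra n p)).jacobson

/-- `R(n,p)` viewed as an `F_p`-subspace of the group algebra. -/
def descentRadicalSubmodule (n p : ℕ) : Submodule (ZMod p) (GroupAlg n p) :=
  Submodule.map (descentAlgebra n p).val.toLinearMap
    ((descentRadical n p).restrictScalars (ZMod p))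

/-- `Y_m`: the span of the `B̄_q` with `q` having at least `m` components. -/
def Ysub (n p m : ℕ) : Submodule (ZMod p) (GroupAlg n p) :=
  Submodule.span (ZMod p) {x | ∃ q : Composition n, m ≤ q.length ∧ x = Bel n p q}

/-- `T`: the span of all differences `B̄_q - B̄_r` with `q ≈ r`. -/
def Tsub (n p : ℕ) : Submodule (ZMod p) (GroupAlg n p) :=
  Submodule.span (ZMod p)
    {x | ∃ q r : Composition n, q.blocks.Perm r.blocks ∧ x = Bel n p q - Bel n p r}

/-- `g(n,p)`: the number of partitions of `n` with no part divisible by `p`. -/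
def gPart (n p : ℕ) : ℕ := Set.ncard {π : n.Partition | ∀ i ∈ π.parts, ¬ p ∣ i}

/-- `g(n,p)`: the number of conjugacy classes of `p`-regular elements of `S_n`. -/
def gReg (n p : ℕ) : ℕ :=
  Set.ncard {c : ConjClasses (Equiv.Perm (Fin n)) | ∀ σ ∈ c.carrier, (orderOf σ).Coprime p}

/-- The Young character `χ_q`: `χ_q(σ)` is the number of ordered set partitions
`(P_1,…,P_s)` of `{1,…,n}` with `|P_i| = a_i`, each of whose blocks is `σ`-invariant. -/
def youngChar {n : ℕ} (q : Composition n) (σ : Equiv.Perm (Fin n)) : ℕ :=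
  (Finset.univ.filter (fun P : Fin q.length → Finset (Fin n) =>
    (∀ i, (P i).card = q.blocksFun i) ∧
    (∀ i j, i ≠ j → Disjoint (P i) (P j)) ∧
    (∀ x, ∃ i, x ∈ P i) ∧
    (∀ i, ∀ x ∈ P i, σ x ∈ P i))).card

/-- `χ̃_q`: the Young character with values reduced mod `p`. -/
def youngCharMod (n p : ℕ) (q : Composition n) : Equiv.Perm (Fin n) → ZMod p :=
  fun σ => (youngChar q σ : ZMod p)

/-- `G(n,p)`: the span of the mod-`p` Young characters. -/
def Gnp (n p : ℕ) : Submodule (ZMod p) (Equiv.Perm (Fin n) → ZMod p) :=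
  Submodule.span (ZMod p) (Set.range (youngCharMod n p))

/-- `S(q,r)`: matrices with row sums `q` and column sums `r`. -/
def SMat {n : ℕ} (q r : Composition n) : Set (Matrix (Fin q.length) (Fin r.length) ℕ) :=
  {Z | (∀ i, ∑ j, Z i j = q.blocksFun i) ∧ (∀ j, ∑ i, Z i j = r.blocksFun j)}

/-- `w(Z)`: the list of nonzero entries of `Z` read row by row. -/
def wList {s t : ℕ} (Z : Matrix (Fin s) (Fin t) ℕ) : List ℕ :=
  ((List.finRange s).flatMap fun i => ((List.finRange t).map fun j => Z i j)).filter
    (fun x => x ≠ 0)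

/-- One merging step: replace two adjacent components by their sum. -/
def mergeStep (l l' : List ℕ) : Prop :=
  ∃ (u v : List ℕ) (a b : ℕ), l = u ++ a :: b :: v ∧ l' = u ++ (a + b) :: v

/-- `coarsens l l'` (`l ⪯ l'` on compositions): `l'` is obtained from `l` by repeatedly
replacing adjacent components by their sum. -/
def coarsens (l l' : List ℕ) : Prop := Relation.ReflTransGen mergeStep l l'

/-! ### Auxiliary material for Statement 1 -/

section Stmt1Aux

open Finset

/-- The matrix with a single nonzero entry `q.blocksFun i` in row `i`, at column `c i`. -/
def matOf {n : ℕ} (q : Composition n) {t : ℕ} (c : Fin q.length → Fin t) :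
    Matrix (Fin q.length) (Fin t) ℕ :=
  fun i j => if c i = j then q.blocksFun i else 0

/-- Functions recording, for each row, the column of the unique nonzero entry, such that
column sums match `r`. -/
def goodSet {n : ℕ} (q r : Composition n) : Set (Fin q.length → Fin r.length) :=
  {c | ∀ j, ∑ i ∈ Finset.univ.filter (fun i => c i = j), q.blocksFun i = r.blocksFun j}

lemma matOf_injective {n : ℕ} (q : Composition n) {t : ℕ} :
    Function.Injective (matOf q (t := t)) := by
  intro c c' h
  funext i
  by_contra hne
  have h1 := congrFun (congrFun h i) (c i)
  have hne' : c' i ≠ c i := fun hh => hne hh.symm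
  simp [matOf, hne'] at h1
  have hpos := q.one_le_blocksFun i
  omega

lemma list_sum_filter_ne_zero (l : List ℕ) : (l.filter (fun x => x ≠ 0)).sum = l.sum := by
  induction l with
  | nil => simp
  | cons y l ih =>
    by_cases hy : y = 0 <;> simp [List.filter_cons, hy] at ih ⊢ <;> omega

lemma filter_unique {α : Type*} {l : List α} (hnd : l.Nodup) {x : α} (hx : x ∈ l)
    (p : α → Prop) [DecidablePred p] (hp : ∀ y ∈ l, p y ↔ y = x) :
    l.filter (fun y => p y) = [x] := by
  induction l with
  | nil => simp at hx
  | cons z zs ih =>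
    rcases List.nodup_cons.mp hnd with ⟨hz, hnd'⟩
    by_cases hzx : z = x
    · subst hzx
      rw [List.filter_cons_of_pos (by simpa using (hp z (by simp)).mpr rfl)]
      have hnil : zs.filter (fun y => p y) = [] := by
        apply List.filter_eq_nil_iff.mpr
        intro y hy
        simp only [decide_eq_true_eq]
        intro hpy
        exact hz ((hp y (by simp [hy])).mp hpy ▸ hy)
      rw [hnil]
    · have hx' : x ∈ zs := by
        rcases List.mem_cons.mp hx with h | h
        · exact absurd h.symm hzx
        · exact h
      rw [List.filter_cons_of_neg (by simpa using fun h => hzx ((hp z (by simp)).mp h))]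
      exact ih hnd' hx' (fun y hy => hp y (by simp [hy]))

lemma flatMap_singleton_eq_map {α β : Type*} (l : List α) (f : α → β) :
    (l.flatMap fun x => [f x]) = l.map f := by
  induction l with
  | nil => rfl
  | cons y l ih => simp only [List.flatMap_cons, List.map_cons, ih]; rfl

lemma filter_flatMap' {α β : Type*} (l : List α) (f : α → List β) (p : β → Bool) :
    (l.flatMap f).filter p = l.flatMap (fun x => (f x).filter p) := by
  induction l with
  | nil => rfl
  | cons y l ih => simp [List.flatMap_cons, List.filter_append, ih]

/-- The chunk decomposition lemma: if a concatenation of lists of positive integers with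
prescribed sums equals the list of those sums, then every chunk is a singleton. -/
lemma chunk_lemma {L : List (List ℕ)} {a : List ℕ}
    (h : List.Forall₂ (fun p x => p.sum = x ∧ ∀ y ∈ p, 0 < y) L a)
    (ha : ∀ x ∈ a, 0 < x) (hf : L.flatten = a) : L = a.map (fun x => [x]) := by
  induction h with
  | nil => simp
  | @cons p x L' a' hpx hL ih =>
    obtain ⟨hsum, hpos⟩ := hpx
    have hx : 0 < x := ha x (by simp)
    match p, hsum, hpos, hf with
    | [], hsum, _, _ =>
      exfalso; rw [List.sum_nil] at hsum; omega
    | y :: ys, hsum, hpos, hf =>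
      simp only [List.flatten_cons, List.cons_append] at hf
      have hy : y = x := (List.cons.injEq _ _ _ _).mp hf |>.1
      have htail : ys ++ L'.flatten = a' := (List.cons.injEq _ _ _ _).mp hf |>.2
      have hys : ys = [] := by
        have hs0 : ys.sum = 0 := by
          rw [List.sum_cons] at hsum; omega
        cases ys with
        | nil => rfl
        | cons z zs =>
          have hz := hpos z (by simp)
          rw [List.sum_cons] at hs0
          omega
      subst hys
      rw [List.nil_append] at htail
      subst hy
      simp only [List.map_cons]
      exact congrArg (List.cons [y]) (ih (fun v hv => ha v (by simp [hv])) htail)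

/-- Characterization: the matrices in `S(q,r)` with word `q` are exactly the `matOf q c`
for `c` in `goodSet q r`. -/
lemma SMat_word_eq_image {n : ℕ} (q r : Composition n) :
    {Z | Z ∈ SMat q r ∧ wList Z = q.blocks} = matOf q '' goodSet q r := by
  have hblocks : q.blocks = (List.finRange q.length).map q.blocksFun := by
    rw [← Composition.ofFn_blocksFun, List.ofFn_eq_map]
  ext Z
  constructor
  · rintro ⟨⟨hrow, hcol⟩, hw⟩
    have hwEq : (List.finRange q.length).flatMap
        (fun i => ((List.finRange r.length).map fun j => Z i j).filter (fun x => x ≠ 0)) =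
        q.blocks := by
      rw [← filter_flatMap']
      exact hw
    have hflat : ((List.finRange q.length).map
        (fun i => ((List.finRange r.length).map fun j => Z i j).filter
          (fun x => x ≠ 0))).flatten = q.blocks := by
      rw [← List.flatMap_def]; exact hwEq
    have hforall : List.Forall₂ (fun p x => p.sum = x ∧ ∀ y ∈ p, 0 < y)
        ((List.finRange q.length).map
          (fun i => ((List.finRange r.length).map fun j => Z i j).filter (fun x => x ≠ 0)))
        q.blocks := by
      rw [hblocks, List.forall₂_map_left_iff, List.forall₂_map_right_iff]
      rw [List.forall₂_same]
      intro i _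
      constructor
      · rw [list_sum_filter_ne_zero, ← List.ofFn_eq_map, List.sum_ofFn]
        exact hrow i
      · intro y hy
        have := List.of_mem_filter hy
        simp only [decide_eq_true_eq] at this
        omega
    have hchunks := chunk_lemma hforall (fun x hx => q.blocks_pos hx) hflat
    rw [hblocks, List.map_map] at hchunks
    have hsingle : ∀ i : Fin q.length,
        ((List.finRange r.length).map fun j => Z i j).filter (fun x => x ≠ 0) =
          [q.blocksFun i] :=
      fun i => List.map_inj_left.mp hchunks i (List.mem_finRange i)
    have hexists : ∀ i : Fin q.length, ∃ j₀ : Fin r.length,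
        Z i j₀ = q.blocksFun i ∧ ∀ j, j ≠ j₀ → Z i j = 0 := by
      intro i
      have hs := hsingle i
      rw [List.filter_map] at hs
      have hlen : (((List.finRange r.length).filter
          ((fun x => decide (x ≠ 0)) ∘ fun j => Z i j))).length = 1 := by
        rw [← List.length_map (fun j => Z i j), hs]
        rfl
      obtain ⟨j₀, hj₀⟩ := List.length_eq_one_iff.mp hlen
      rw [hj₀] at hs
      simp only [List.map_cons, List.map_nil, List.cons.injEq, and_true] at hs
      refine ⟨j₀, hs, ?_⟩
      intro j hj
      by_contra hZ
      have hmem : j ∈ (List.finRange r.length).filter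
          ((fun x => decide (x ≠ 0)) ∘ fun j => Z i j) := by
        apply List.mem_filter.mpr
        exact ⟨List.mem_finRange j, by simpa using hZ⟩
      rw [hj₀] at hmem
      exact hj (by simpa using hmem)
    choose c hc1 hc2 using hexists
    have hZ : Z = matOf q c := by
      funext i j
      by_cases hj : c i = j
      · subst hj; simp [matOf, hc1 i]
      · rw [matOf, if_neg hj]
        exact hc2 i j (fun hh => hj hh.symm)
    refine ⟨c, ?_, hZ.symm⟩
    intro j
    rw [Finset.sum_filter, ← hcol j]
    apply Finset.sum_congr rfl
    intro i _
    rw [hZ]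
    rfl
  · rintro ⟨c, hc, rfl⟩
    refine ⟨⟨?_, ?_⟩, ?_⟩
    · intro i
      simp only [matOf]
      rw [Finset.sum_ite_eq]
      simp
    · intro j
      rw [← hc j, Finset.sum_filter]
      rfl
    · rw [wList, filter_flatMap']
      have hsingle : ∀ i ∈ List.finRange q.length,
          (((List.finRange r.length).map fun j => matOf q c i j).filter (fun x => x ≠ 0)) =
            [q.blocksFun i] := by
        intro i _
        rw [List.filter_map]
        have hfil : (List.finRange r.length).filter
            ((fun x => decide (x ≠ 0)) ∘ fun j => matOf q c i j) = [c i] := by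
          have := filter_unique (List.nodup_finRange r.length) (List.mem_finRange (c i))
            (fun j => matOf q c i j ≠ 0) (fun j _ => by
              constructor
              · intro hne
                by_contra hj
                exact hne (by rw [matOf, if_neg (fun hh => hj hh.symm)])
              · rintro rfl
                rw [matOf, if_pos rfl]
                exact Nat.one_le_iff_ne_zero.mp (q.one_le_blocksFun i))
          rw [← this]
          apply List.filter_congr
          intro j _
          simp [Function.comp]
        rw [hfil]
        simp [matOf]
      calc ((List.finRange q.length).flatMap fun i =>
              (((List.finRange r.length).map fun j => matOf q c i j).filter (fun x => x ≠ 0)))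
          = (List.finRange q.length).flatMap (fun i => [q.blocksFun i]) := by
            rw [List.flatMap_def, List.flatMap_def, List.map_congr_left hsingle]
        _ = (List.finRange q.length).map q.blocksFun := flatMap_singleton_eq_map _ _
        _ = q.blocks := hblocks.symm

lemma card_fiber {n : ℕ} (r : Composition n) (v : ℕ) :
    Fintype.card {j : Fin r.length // r.blocksFun j = v} = r.blocks.count v := by
  classical
  have h1 : (r.blocks : Multiset ℕ) = Multiset.map r.blocksFun Finset.univ.val := by
    rw [← Composition.ofFn_blocksFun, List.ofFn_eq_map, Fin.univ_def]
    rfl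
  rw [← Multiset.coe_count, h1, Multiset.count_map, Fintype.card_subtype,
    Finset.card, Finset.filter_val]
  congr 1
  apply Multiset.filter_congr
  intro j _
  exact eq_comm

/-- The subgroup of column permutations preserving the column sums of `r`. -/
def colStab {n : ℕ} (r : Composition n) : Subgroup (Equiv.Perm (Fin r.length)) where
  carrier := {g | ∀ j, r.blocksFun (g j) = r.blocksFun j}
  one_mem' := fun _ => rfl
  mul_mem' := by
    intro g h hg hh j
    rw [Equiv.Perm.mul_apply]
    exact (hg (h j)).trans (hh j)
  inv_mem' := by
    intro g hg j
    have h1 := hg (g⁻¹ j)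
    rw [show g (g⁻¹ j) = j from g.apply_symm_apply j] at h1
    exact h1.symm

lemma goodSet_comp {n : ℕ} {q r r' : Composition n}
    (τ : Fin r.length ≃ Fin r'.length) (hτ : ∀ j, r'.blocksFun (τ j) = r.blocksFun j)
    {c : Fin q.length → Fin r.length} (hc : c ∈ goodSet q r) :
    (fun i => τ (c i)) ∈ goodSet q r' := by
  intro j'
  have h1 := hc (τ.symm j')
  have h2 : r'.blocksFun j' = r.blocksFun (τ.symm j') := by
    rw [← hτ (τ.symm j'), Equiv.apply_symm_apply]
  rw [h2, ← h1]
  refine Finset.sum_congr (Finset.filter_congr ?_) (fun _ _ => rfl)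
  intro i _
  exact Equiv.apply_eq_iff_eq_symm_apply τ

lemma goodSet_image_eq {n : ℕ} {q r r' : Composition n}
    (τ : Fin r.length ≃ Fin r'.length) (hτ : ∀ j, r'.blocksFun (τ j) = r.blocksFun j) :
    (fun c : Fin q.length → Fin r.length => τ ∘ c) '' goodSet q r = goodSet q r' := by
  have hτ' : ∀ j', r.blocksFun (τ.symm j') = r'.blocksFun j' := by
    intro j'; rw [← hτ (τ.symm j'), Equiv.apply_symm_apply]
  ext c'
  constructor
  · rintro ⟨c, hc, rfl⟩
    exact goodSet_comp τ hτ hc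
  · intro hc'
    refine ⟨τ.symm ∘ c', goodSet_comp τ.symm hτ' hc', ?_⟩
    funext i; simp

lemma exists_tau {n : ℕ} {r r' : Composition n} (h : r.blocks.Perm r'.blocks) :
    ∃ τ : Fin r.length ≃ Fin r'.length, ∀ j, r'.blocksFun (τ j) = r.blocksFun j := by
  classical
  have hcount : ∀ v : ℕ, Fintype.card {j : Fin r.length // r.blocksFun j = v} =
      Fintype.card {j : Fin r'.length // r'.blocksFun j = v} := by
    intro v; rw [card_fiber, card_fiber, h.count_eq]
  let e : ∀ v : ℕ, {j : Fin r.length // r.blocksFun j = v} ≃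
      {j : Fin r'.length // r'.blocksFun j = v} :=
    fun v => Fintype.equivOfCardEq (hcount v)
  refine ⟨(Equiv.sigmaFiberEquiv r.blocksFun).symm.trans
    ((Equiv.sigmaCongrRight e).trans (Equiv.sigmaFiberEquiv r'.blocksFun)), ?_⟩
  intro j
  exact (e (r.blocksFun j) ⟨j, rfl⟩).2

/-- The action of `colStab r` on `goodSet q r` by postcomposition. -/
def goodAction {n : ℕ} (q r : Composition n) : MulAction (colStab r) (goodSet q r) where
  smul g c := ⟨fun i => (g : Equiv.Perm (Fin r.length)) (c.val i),
    goodSet_comp (g : Equiv.Perm (Fin r.length)) g.2 c.2⟩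
  one_smul c := rfl
  mul_smul g h c := rfl

lemma card_dvd_of_free (G X : Type*) [Group G] [Finite G] [Finite X] [MulAction G X]
    (h : ∀ x : X, MulAction.stabilizer G x = ⊥) : Nat.card G ∣ Nat.card X := by
  classical
  have horb : ∀ x : X, Nat.card (MulAction.orbit G x) = Nat.card G := by
    intro x
    rw [Nat.card_congr (MulAction.orbitEquivQuotientStabilizer G x), h x,
      Nat.card_congr (QuotientGroup.quotientBot (G := G)).toEquiv]
  rw [Nat.card_congr (MulAction.selfEquivSigmaOrbits G X)]
  haveI : Finite (MulAction.orbitRel.Quotient G X) := Quotient.finite _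
  haveI := Fintype.ofFinite (MulAction.orbitRel.Quotient G X)
  haveI : ∀ ω : MulAction.orbitRel.Quotient G X, Fintype (MulAction.orbit G ω.out) :=
    fun ω => Fintype.ofFinite _
  have hsig : Nat.card ((ω : MulAction.orbitRel.Quotient G X) ×
      ↑(MulAction.orbit G (Quotient.out ω))) =
      ∑ ω : MulAction.orbitRel.Quotient G X, Nat.card (MulAction.orbit G (Quotient.out ω)) := by
    rw [Nat.card_eq_fintype_card, Fintype.card_sigma]
    exact Finset.sum_congr rfl (fun ω _ => (Nat.card_eq_fintype_card).symm)
  rw [hsig, Finset.sum_congr rfl (fun ω _ => horb _), Finset.sum_const, smul_eq_mul]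
  exact Dvd.intro_left _ rfl

lemma card_colStab {n : ℕ} (r : Composition n) :
    Nat.card (colStab r) = ∏ i ∈ Finset.Icc 1 n, Nat.factorial (r.blocks.count i) := by
  classical
  have e : colStab r ≃ {g : Equiv.Perm (Fin r.length) // r.blocksFun ∘ g = r.blocksFun} := by
    apply Equiv.subtypeEquivRight
    intro g
    constructor
    · intro hg; funext j; exact hg j
    · intro hg j; exact congrFun hg j
  rw [Nat.card_congr e, Nat.card_eq_fintype_card, DomMulAct.stabilizer_card' r.blocksFun]
  have himg : Finset.univ.image r.blocksFun ⊆ Finset.Icc 1 n := by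
    intro v hv
    obtain ⟨j, _, rfl⟩ := Finset.mem_image.mp hv
    exact Finset.mem_Icc.mpr ⟨r.one_le_blocksFun j, r.blocksFun_le j⟩
  calc ∏ v ∈ Finset.univ.image r.blocksFun,
        Nat.factorial (Fintype.card {j // r.blocksFun j = v})
      = ∏ v ∈ Finset.univ.image r.blocksFun, Nat.factorial (r.blocks.count v) :=
        Finset.prod_congr rfl (fun v _ => congrArg Nat.factorial (card_fiber r v))
    _ = ∏ i ∈ Finset.Icc 1 n, Nat.factorial (r.blocks.count i) := by
        apply Finset.prod_subset himg
        intro v _ hv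
        have hcnt : r.blocks.count v = 0 := by
          rw [List.count_eq_zero]
          intro hmem
          apply hv
          rw [← Composition.ofFn_blocksFun, List.mem_ofFn] at hmem
          obtain ⟨j, rfl⟩ := hmem
          exact Finset.mem_image.mpr ⟨j, Finset.mem_univ j, rfl⟩
        rw [hcnt]
        rfl

end Stmt1Aux

/-- The number of matrices `Z ∈ S(q,r)` with `w(Z) = q` is divisible by
`t_1!·t_2!·…·t_n!` where `t_i` is the number of components of `r` equal to `i`, and this
number is unchanged if `r` is replaced by any composition `r' ≈ r`. -/
theorem stmt1 (n : ℕ) (q r : Composition n) :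
    (∏ i ∈ Finset.Icc 1 n, Nat.factorial (r.blocks.count i)) ∣
      Set.ncard {Z ∈ SMat q r | wList Z = q.blocks} ∧
    (∀ r' : Composition n, r.blocks.Perm r'.blocks →
      Set.ncard {Z ∈ SMat q r | wList Z = q.blocks} =
        Set.ncard {Z ∈ SMat q r' | wList Z = q.blocks}) := by
  classical
  have hset : {Z ∈ SMat q r | wList Z = q.blocks} = matOf q '' goodSet q r :=
    SMat_word_eq_image q r
  constructor
  · rw [hset, Set.ncard_image_of_injective _ (matOf_injective q),
      ← card_colStab r, ← Nat.card_coe_set_eq]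
    letI := goodAction q r
    apply card_dvd_of_free
    rintro ⟨c, hc⟩
    rw [eq_bot_iff]
    rintro ⟨g, hg⟩ hmem
    rw [MulAction.mem_stabilizer_iff] at hmem
    have hgc : ∀ i, g (c i) = c i := by
      intro i
      exact congrFun (congrArg Subtype.val hmem) i
    have hsurj : ∀ j, ∃ i, c i = j := by
      intro j
      by_contra hne
      push_neg at hne
      have h0 := hc j
      rw [Finset.filter_false_of_mem (fun i _ => hne i), Finset.sum_empty] at h0
      exact Nat.one_le_iff_ne_zero.mp (r.one_le_blocksFun j) h0.symm
    rw [Subgroup.mem_bot]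
    apply Subtype.ext
    apply Equiv.ext
    intro j
    obtain ⟨i, rfl⟩ := hsurj j
    simpa using hgc i
  · intro r' hperm
    obtain ⟨τ, hτ⟩ := exists_tau hperm
    have hinj : Function.Injective (fun c : Fin q.length → Fin r.length => τ ∘ c) :=
      fun c c' h => funext fun i => τ.injective (congrFun h i)
    rw [hset, SMat_word_eq_image q r',
      Set.ncard_image_of_injective _ (matOf_injective q),
      Set.ncard_image_of_injective _ (matOf_injective q),
      ← goodSet_image_eq (q := q) τ hτ,
      Set.ncard_image_of_injective _ hinj]

end
end

section
/- Let λ and μ be partitions of n, regarded as weakly decreasing compositions, and let σ_μ ∈ S_n be an element of cycle type μ. If χ_λ(σ_μ) ≠ 0 then the parts of μ can be grouped so that the sums of the groups are exactly the parts of λ (in particular μ ≤ λ in lexicographic order). Moreover, if λ has t_i parts equal to i for each i, then χ_λ evaluated at an element of cycle type λ equals t_1!·t_2!·…·t_n!. -/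
open scoped Classical

set_option synthInstance.maxHeartbeats 1000000
set_option maxHeartbeats 1000000

noncomputable section

namespace Stmt4Aux

open Finset

variable {n : ℕ}

/-- Index type for the orbits of a permutation: nontrivial cycles plus fixed points. -/
abbrev OrbIdx (σ : Equiv.Perm (Fin n)) : Type :=
  {c : Equiv.Perm (Fin n) // c ∈ σ.cycleFactorsFinset} ⊕ {x : Fin n // x ∉ σ.support}

/-- The underlying set of an orbit. -/
def orbSet (σ : Equiv.Perm (Fin n)) : OrbIdx σ → Finset (Fin n) :=
  Sum.elim (fun c => c.1.support) (fun x => {x.1})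

lemma orbSet_nonempty (σ : Equiv.Perm (Fin n)) (o : OrbIdx σ) : (orbSet σ o).Nonempty := by
  rcases o with c | x
  · obtain ⟨a, ha, -⟩ := (Equiv.Perm.mem_cycleFactorsFinset_iff.mp c.2).1
    exact ⟨a, Equiv.Perm.mem_support.mpr ha⟩
  · exact ⟨x.1, Finset.mem_singleton_self _⟩

lemma orbSet_disjoint (σ : Equiv.Perm (Fin n)) {o o' : OrbIdx σ} (h : o ≠ o') :
    Disjoint (orbSet σ o) (orbSet σ o') := by
  rcases o with c | x <;> rcases o' with c' | x'
  · have hcc : c.1 ≠ c'.1 := fun hh => h (by cases c; cases c'; simp_all)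
    exact Equiv.Perm.Disjoint.disjoint_support
      (Equiv.Perm.cycleFactorsFinset_pairwise_disjoint σ c.2 c'.2 hcc)
  · simp only [orbSet, Sum.elim_inl, Sum.elim_inr, Finset.disjoint_singleton_right]
    exact fun hx => x'.2 (Equiv.Perm.mem_cycleFactorsFinset_support_le c.2 hx)
  · simp only [orbSet, Sum.elim_inl, Sum.elim_inr, Finset.disjoint_singleton_left]
    exact fun hx => x.2 (Equiv.Perm.mem_cycleFactorsFinset_support_le c'.2 hx)
  · have hne : x'.1 ≠ x.1 := fun hh => h (by cases x; cases x'; simp_all)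
    simpa [orbSet] using hne.symm

lemma orbSet_cover (σ : Equiv.Perm (Fin n)) (x : Fin n) : ∃ o, x ∈ orbSet σ o := by
  by_cases hx : x ∈ σ.support
  · refine ⟨Sum.inl ⟨σ.cycleOf x, Equiv.Perm.cycleOf_mem_cycleFactorsFinset_iff.mpr hx⟩, ?_⟩
    simp only [orbSet, Sum.elim_inl]
    rw [Equiv.Perm.mem_support_cycleOf_iff]
    exact ⟨Equiv.Perm.SameCycle.refl _ _, hx⟩
  · exact ⟨Sum.inr ⟨x, hx⟩, Finset.mem_singleton_self _⟩

lemma orbSet_inv (σ : Equiv.Perm (Fin n)) {o : OrbIdx σ} {x : Fin n} (hx : x ∈ orbSet σ o) :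
    σ x ∈ orbSet σ o := by
  rcases o with c | y
  · exact (Equiv.Perm.mem_cycleFactorsFinset_support c.2 x).mpr hx
  · simp only [orbSet, Sum.elim_inr, Finset.mem_singleton] at hx ⊢
    subst hx
    exact Equiv.Perm.notMem_support.mp y.2

/-- Points in the same orbit lie in the same σ-invariant set. -/
lemma same_block {σ : Equiv.Perm (Fin n)} {s : Finset (Fin n)}
    (hinv : ∀ x ∈ s, σ x ∈ s) {o : OrbIdx σ} {x y : Fin n}
    (hx : x ∈ orbSet σ o) (hy : y ∈ orbSet σ o) (hxs : x ∈ s) : y ∈ s := by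
  rcases o with c | z
  · simp only [orbSet, Sum.elim_inl] at hx hy
    have hc := Equiv.Perm.mem_cycleFactorsFinset_iff.mp c.2
    obtain ⟨i, hi⟩ := hc.1.exists_pow_eq (Equiv.Perm.mem_support.mp hx)
      (Equiv.Perm.mem_support.mp hy)
    have key : ∀ (i : ℕ) (x : Fin n), x ∈ c.1.support → x ∈ s →
        (c.1 ^ i) x ∈ c.1.support ∧ (c.1 ^ i) x ∈ s := by
      intro i
      induction i with
      | zero =>
        intro x h1 h2
        simp only [pow_zero, Equiv.Perm.one_apply]
        exact ⟨h1, h2⟩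
      | succ i ih =>
        intro x h1 h2
        have h3 : c.1 x ∈ c.1.support := Equiv.Perm.apply_mem_support.mpr h1
        have h4 : c.1 x ∈ s := by rw [hc.2 x h1]; exact hinv x h2
        have := ih (c.1 x) h3 h4
        simpa only [pow_succ, Equiv.Perm.mul_apply] using this
    have := (key i x hx hxs).2
    rwa [hi] at this
  · simp only [orbSet, Sum.elim_inr, Finset.mem_singleton] at hx hy
    rw [hy, ← hx]; exact hxs

/-- The multiset of orbit sizes is the cycle-type partition. -/
lemma sizes_eq (σ : Equiv.Perm (Fin n)) :
    Multiset.map (fun o => (orbSet σ o).card) Finset.univ.val = σ.partition.parts := by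
  have huniv : (Finset.univ : Finset (OrbIdx σ)) =
      Finset.disjSum Finset.univ Finset.univ := (Finset.univ_disjSum_univ).symm
  rw [huniv]
  rw [Equiv.Perm.parts_partition]
  have : (Finset.disjSum (Finset.univ : Finset {c // c ∈ σ.cycleFactorsFinset})
      (Finset.univ : Finset {x : Fin n // x ∉ σ.support})).val
      = Multiset.map Sum.inl Finset.univ.val + Multiset.map Sum.inr Finset.univ.val := rfl
  rw [this, Multiset.map_add, Multiset.map_map, Multiset.map_map]
  congr 1
  · -- cycle part
    rw [Finset.univ_eq_attach, Finset.attach_val]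
    have : Multiset.map ((fun o => (orbSet σ o).card) ∘ Sum.inl) σ.cycleFactorsFinset.val.attach
        = Multiset.map ((Finset.card ∘ Equiv.Perm.support) ∘ Subtype.val)
          σ.cycleFactorsFinset.val.attach := rfl
    rw [this, ← Multiset.map_map, Multiset.attach_map_val]
    rfl
  · -- fixed point part
    have : Multiset.map ((fun o => (orbSet σ o).card) ∘ Sum.inr)
        (Finset.univ : Finset {x : Fin n // x ∉ σ.support}).val
        = Multiset.map (fun _ => 1)
          (Finset.univ : Finset {x : Fin n // x ∉ σ.support}).val := by
      apply Multiset.map_congr rfl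
      intro x _
      simp [orbSet]
    rw [this, Multiset.map_const']
    congr 1
    have h2 : Fintype.card {x : Fin n // x ∉ σ.support}
        = Fintype.card (Fin n) - σ.support.card := by
      rw [Fintype.card_subtype]
      have : Finset.filter (fun x => x ∉ σ.support) Finset.univ = σ.supportᶜ := by
        ext x; simp
      rw [this, Finset.card_compl]
    rw [← h2]
    rfl

/-- Each block of a σ-invariant ordered set partition is a union of orbits. -/
lemma struct (σ : Equiv.Perm (Fin n)) {s : ℕ} (P : Fin s → Finset (Fin n))
    (hdisj : ∀ i j, i ≠ j → Disjoint (P i) (P j)) (hcov : ∀ x, ∃ i, x ∈ P i)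
    (hinv : ∀ i, ∀ x ∈ P i, σ x ∈ P i) :
    ∃ F : OrbIdx σ → Fin s,
      ∀ j, P j = (Finset.univ.filter (fun o => F o = j)).biUnion (orbSet σ) := by
  have pt : ∀ o : OrbIdx σ, {x // x ∈ orbSet σ o} := fun o => ⟨(orbSet_nonempty σ o).choose,
    (orbSet_nonempty σ o).choose_spec⟩
  refine ⟨fun o => (hcov (pt o).1).choose, fun j => ?_⟩
  have hpt : ∀ o : OrbIdx σ, (pt o).1 ∈ P ((hcov (pt o).1).choose) :=
    fun o => (hcov (pt o).1).choose_spec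
  ext x
  simp only [Finset.mem_biUnion, Finset.mem_filter, Finset.mem_univ, true_and]
  constructor
  · intro hx
    obtain ⟨o, ho⟩ := orbSet_cover σ x
    refine ⟨o, ?_, ho⟩
    -- pt o is in P j since x ∈ P j and they share the orbit o
    have h1 : (pt o).1 ∈ P j := same_block (hinv j) ho (pt o).2 hx
    by_contra hne
    exact (Finset.disjoint_left.mp (hdisj _ _ hne) (hpt o)) h1
  · rintro ⟨o, rfl, hx⟩
    exact same_block (hinv _) (pt o).2 hx (hpt o)

lemma card_fiber_eq_count {I : Type*} [Fintype I] (g : I → ℕ) (v : ℕ) :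
    Nat.card {i // g i = v} = Multiset.count v (Multiset.map g Finset.univ.val) := by
  rw [Nat.card_eq_fintype_card, Multiset.count_map, Fintype.card_subtype]
  have h1 : Finset.filter (fun i => g i = v) Finset.univ
      = Finset.filter (fun i => v = g i) Finset.univ := by
    apply Finset.filter_congr; intro i _; simp [eq_comm]
  rw [h1]
  rfl

lemma blocks_coe (q : Composition n) :
    (↑q.blocks : Multiset ℕ) = Multiset.map q.blocksFun Finset.univ.val := by
  conv_lhs => rw [← List.map_get_finRange q.blocks]
  rfl

lemma card_fiber_blocksFun (q : Composition n) (v : ℕ) :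
    Nat.card {i : Fin q.length // q.blocksFun i = v} = q.blocks.count v := by
  rw [card_fiber_eq_count, ← blocks_coe, Multiset.coe_count]

lemma card_fiber_orb {σ : Equiv.Perm (Fin n)} {q : Composition n}
    (hσ : σ.partition.parts = ↑q.blocks) (v : ℕ) :
    Nat.card {o : OrbIdx σ // (orbSet σ o).card = v}
      = Nat.card {i : Fin q.length // q.blocksFun i = v} := by
  rw [card_fiber_eq_count, sizes_eq, hσ, Multiset.coe_count, card_fiber_blocksFun]

lemma card_orbIdx {σ : Equiv.Perm (Fin n)} {q : Composition n}
    (hσ : σ.partition.parts = ↑q.blocks) :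
    Fintype.card (OrbIdx σ) = q.length := by
  have h1 : Fintype.card (OrbIdx σ)
      = Multiset.card (Multiset.map (fun o => (orbSet σ o).card)
          (Finset.univ : Finset (OrbIdx σ)).val) := by
    rw [Multiset.card_map]; rfl
  rw [h1, sizes_eq, hσ]
  simpa using q.blocks_length

lemma exists_value_equiv {I J : Type*} [Fintype I] [Fintype J] (g : I → ℕ) (h : J → ℕ)
    (hc : ∀ v, Nat.card {i // g i = v} = Nat.card {j // h j = v}) :
    ∃ e : I ≃ J, ∀ i, h (e i) = g i := by
  simp only [Nat.card_eq_fintype_card] at hc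
  refine ⟨(Equiv.sigmaFiberEquiv g).symm.trans
    ((Equiv.sigmaCongrRight fun v => Fintype.equivOfCardEq (hc v)).trans
      (Equiv.sigmaFiberEquiv h)), fun i => ?_⟩
  exact (Fintype.equivOfCardEq (hc (g i)) ⟨i, rfl⟩).2

open Nat in
lemma card_value_preserving {I J V : Type*} [Fintype I] [Fintype J] [Fintype V]
    (G : I → V) (H : J → V)
    (hc : ∀ v, Nat.card {i // G i = v} = Nat.card {j // H j = v}) :
    Nat.card {e : I ≃ J // ∀ i, H (e i) = G i}
      = ∏ v : V, (Nat.card {i // G i = v})! := by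
  simp only [Nat.card_eq_fintype_card] at hc ⊢
  have Ψ : {e : I ≃ J // ∀ i, H (e i) = G i}
      ≃ (∀ v : V, {i // G i = v} ≃ {j // H j = v}) := by
    refine
      { toFun := fun e v => Equiv.subtypeEquiv e.1 (fun i => by rw [e.2 i])
        invFun := fun w => ⟨(Equiv.sigmaFiberEquiv G).symm.trans
          ((Equiv.sigmaCongrRight w).trans (Equiv.sigmaFiberEquiv H)),
          fun i => ((w (G i)) ⟨i, rfl⟩).2⟩
        left_inv := ?_
        right_inv := ?_ }
    · rintro ⟨e, he⟩
      apply Subtype.ext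
      apply Equiv.ext
      intro i
      rfl
    · intro w
      funext v
      apply Equiv.ext
      rintro ⟨i, hi⟩
      subst hi
      rfl
  rw [Fintype.card_congr Ψ, Fintype.card_pi]
  refine Finset.prod_congr rfl fun v _ => ?_
  exact Fintype.card_equiv (Fintype.equivOfCardEq (hc v))

lemma rep_shift (k m : ℕ) (w : List ℕ) :
    List.replicate k m ++ m :: w = m :: (List.replicate k m ++ w) := by
  induction k with
  | zero => simp
  | succ k ih => simp only [List.replicate_succ, List.cons_append, ih]

/-- Key combinatorial lemma: if `M` refines `L` (elements of `M` can be grouped so that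
group sums give `L`), both sorted decreasingly with positive entries, then `M = L` or
`M < L` lexicographically. -/
lemma lemB : ∀ (M L : List ℕ) (c : List (List ℕ)),
    (∀ x ∈ L, 0 < x) → (∀ x ∈ M, 0 < x) →
    M.Pairwise (· ≥ ·) → L.Pairwise (· ≥ ·) →
    c.map List.sum = L → M.Perm c.flatten →
    M = L ∨ List.Lex (· < ·) M L := by
  intro M
  induction M with
  | nil =>
    intro L c hL _hM _sM _sL hsum hperm
    left
    have hj : c.flatten = [] := (hperm.symm).eq_nil
    symm
    rw [List.eq_nil_iff_forall_not_mem]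
    intro x hx
    rw [← hsum, List.mem_map] at hx
    obtain ⟨g, hg, rfl⟩ := hx
    have : g = [] := by
      rw [List.eq_nil_iff_forall_not_mem]
      intro y hy
      have : y ∈ c.flatten := List.mem_flatten.mpr ⟨g, hg, hy⟩
      rw [hj] at this
      exact absurd this List.not_mem_nil
    have hL0 := hL g.sum (by rw [← hsum]; exact List.mem_map_of_mem hg)
    rw [this] at hL0
    simp at hL0
  | cons m M' ih =>
    intro L c hL hM sM sL hsum hperm
    rcases L with _ | ⟨a, L'⟩
    · exfalso
      have hc : c = [] := by simpa using congrArg List.length hsum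
      rw [hc] at hperm
      simpa using hperm.eq_nil
    -- m belongs to some group g of c
    have hmj : m ∈ c.flatten := hperm.subset (List.mem_cons_self)
    obtain ⟨g, hg, hmg⟩ := List.mem_flatten.mp hmj
    have hgsum_mem : g.sum ∈ a :: L' := by
      rw [← hsum]; exact List.mem_map_of_mem hg
    have hga : g.sum ≤ a := by
      rcases List.mem_cons.mp hgsum_mem with h | h
      · omega
      · exact List.rel_of_pairwise_cons sL h
    have hmle : m ≤ g.sum := List.single_le_sum (fun x _ => Nat.zero_le x) m hmg
    have hma : m ≤ a := le_trans hmle hga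
    rcases lt_or_eq_of_le hma with hlt | heq
    · right; exact List.Lex.rel hlt
    -- m = a
    have hgm : g.sum = m := le_antisymm (heq ▸ hga) hmle
    -- g = [m]
    have hgpos : ∀ x ∈ g, 0 < x := by
      intro x hx
      exact hM x (hperm.mem_iff.mpr (List.mem_flatten.mpr ⟨g, hg, hx⟩))
    have hgsingle : g = [m] := by
      have hperm' : g.Perm (m :: g.erase m) := List.perm_cons_erase hmg
      have hsum' : g.sum = m + (g.erase m).sum := by rw [hperm'.sum_eq]; simp
      have hzero : (g.erase m).sum = 0 := by omega
      have herase : g.erase m = [] := by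
        rw [List.eq_nil_iff_forall_not_mem]
        intro y hy
        have hy' : y ∈ g := List.mem_of_mem_erase hy
        have := hgpos y hy'
        have := List.single_le_sum (fun x _ => Nat.zero_le x) y hy
        omega
      rw [herase] at hperm'
      exact List.perm_singleton.mp hperm'
    obtain ⟨u, v, hc⟩ := List.append_of_mem hg
    -- L = m :: (u ++ v).map sum
    have hLdecomp : a :: L' = u.map List.sum ++ m :: v.map List.sum := by
      rw [← hsum, hc]
      simp [hgsingle]
    have humap : u.map List.sum = List.replicate u.length m := by
      rw [List.eq_replicate_iff]
      refine ⟨by simp, fun x hx => ?_⟩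
      have hxL : x ∈ a :: L' := by rw [hLdecomp]; exact List.mem_append_left _ hx
      have hxa : x ≤ a := by
        rcases List.mem_cons.mp hxL with h | h
        · omega
        · exact List.rel_of_pairwise_cons sL h
      have hxm : m ≤ x := by
        have hpair := hLdecomp ▸ sL
        rw [List.pairwise_append] at hpair
        exact hpair.2.2 x hx m List.mem_cons_self
      omega
    have hLeq : a :: L' = m :: ((u ++ v).map List.sum) := by
      rw [hLdecomp, humap, rep_shift, List.map_append, ← humap]
    have ham : a = m := by injection hLeq
    have hL' : L' = (u ++ v).map List.sum := by injection hLeq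
    -- M' ~ (u ++ v).flatten
    have hjoin : c.flatten = u.flatten ++ m :: v.flatten := by
      rw [hc, List.flatten_append, hgsingle]
      simp
    have hperm2 : (m :: M').Perm (m :: (u.flatten ++ v.flatten)) := by
      rw [hjoin] at hperm
      exact hperm.trans List.perm_middle
    have hpermM' : M'.Perm ((u ++ v).flatten) := by
      rw [List.flatten_append]
      exact hperm2.cons_inv
    have := ih L' (u ++ v)
      (fun x hx => hL x (by rw [hLeq]; exact List.mem_cons_of_mem _ (hL' ▸ hx)))
      (fun x hx => hM x (List.mem_cons_of_mem _ hx))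
      sM.of_cons sL.of_cons hL'.symm hpermM'
    rcases this with h | h
    · left; rw [h, ham]
    · right
      rw [ham]
      exact List.Lex.cons h

lemma finset_sum_eq' {m : ℕ} {β : Type*} [AddCommMonoid β] (h : Fin m → β) :
    ∑ i, h i = ((List.finRange m).map h).sum := rfl

lemma list_filter_map_sum {α : Type*} (l : List α) (p : α → Prop) [DecidablePred p] (g : α → ℕ) :
    ((l.filter (fun i => decide (p i))).map g).sum
      = (l.map (fun i => if p i then g i else 0)).sum := by
  induction l with
  | nil => simp
  | cons a t ih =>
    by_cases h : p a <;> simp [List.filter_cons, h, ih]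

lemma list_sum_filter {m : ℕ} (p : Fin m → Prop) [DecidablePred p] (g : Fin m → ℕ) :
    (((List.finRange m).filter (fun i => decide (p i))).map g).sum
      = ∑ i ∈ Finset.univ.filter p, g i := by
  rw [Finset.sum_filter, list_filter_map_sum, finset_sum_eq']

lemma multiset_sum_filter_eq {m s : ℕ} (f : Fin m → Fin s) (S : Multiset (Fin m)) :
    ∑ j : Fin s, Multiset.filter (fun i => f i = j) S = S := by
  induction S using Multiset.induction_on with
  | empty => simp
  | cons a S ih =>
    simp only [Multiset.filter_cons]
    rw [Finset.sum_add_distrib, ih]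
    have : ∑ j : Fin s, (if f a = j then ({a} : Multiset (Fin m)) else 0) = {a} := by
      rw [Finset.sum_ite_eq]
      simp
    rw [this, ← Multiset.singleton_add]

lemma coe_flatten_map {ι : Type*} (l : List ι) (G : ι → List ℕ) :
    (↑((l.map G).flatten) : Multiset ℕ) = (l.map (fun i => (↑(G i) : Multiset ℕ))).sum := by
  induction l with
  | nil => simp
  | cons a t ih => simp [← Multiset.coe_add, ih]

lemma perm_flatten_groups {m s : ℕ} (f : Fin m → Fin s) (g : Fin m → ℕ) :
    ((List.finRange m).map g).Perm
      (((List.finRange s).map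
        (fun j => ((List.finRange m).filter (fun i => decide (f i = j))).map g)).flatten) := by
  rw [← Multiset.coe_eq_coe, coe_flatten_map]
  have h1 : ((List.finRange s).map
      (fun j => (↑(((List.finRange m).filter (fun i => decide (f i = j))).map g) : Multiset ℕ))).sum
      = ∑ j : Fin s, Multiset.map g (Multiset.filter (fun i => f i = j)
          (Finset.univ : Finset (Fin m)).val) := by
    rw [finset_sum_eq']
    rfl
  rw [h1]
  have h2 : ∀ j : Fin s, Multiset.map g (Multiset.filter (fun i => f i = j)
      (Finset.univ : Finset (Fin m)).val)
      = (Multiset.mapAddMonoidHom g) (Multiset.filter (fun i => f i = j) Finset.univ.val) := by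
    intro j; rfl
  simp only [h2]
  rw [← map_sum (Multiset.mapAddMonoidHom g), multiset_sum_filter_eq]
  rfl

lemma orbSet_injective (σ : Equiv.Perm (Fin n)) : Function.Injective (orbSet σ) := by
  intro o o' h
  by_contra hne
  obtain ⟨x, hx⟩ := orbSet_nonempty σ o
  exact (Finset.disjoint_left.mp (orbSet_disjoint σ hne) hx) (h ▸ hx)

open Nat in
lemma count_valid (lam : Composition n) (τ : Equiv.Perm (Fin n))
    (hτ : τ.partition.parts = ↑lam.blocks) :
    youngChar lam τ = ∏ i ∈ Finset.Icc 1 n, (lam.blocks.count i)! := by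
  set G : OrbIdx τ → Fin (n+1) := fun o => ⟨(orbSet τ o).card, by
    have := Finset.card_le_univ (orbSet τ o)
    rw [Fintype.card_fin] at this
    omega⟩ with hG
  set H : Fin lam.length → Fin (n+1) := fun j => ⟨lam.blocksFun j, by
    have := Composition.blocksFun_le lam j
    omega⟩ with hH
  have hGfib : ∀ v : Fin (n+1),
      Nat.card {o // G o = v} = Nat.card {o : OrbIdx τ // (orbSet τ o).card = (v : ℕ)} :=
    fun v => Nat.card_congr (Equiv.subtypeEquivRight (by intro o; simp [hG, Fin.ext_iff]))
  have hHfib : ∀ v : Fin (n+1),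
      Nat.card {j // H j = v} = Nat.card {j : Fin lam.length // lam.blocksFun j = (v : ℕ)} :=
    fun v => Nat.card_congr (Equiv.subtypeEquivRight (by intro j; simp [hH, Fin.ext_iff]))
  have hfib : ∀ v : Fin (n+1), Nat.card {o // G o = v} = Nat.card {j // H j = v} := by
    intro v
    rw [hGfib, hHfib, card_fiber_orb hτ]
  have hyc : youngChar lam τ
      = Nat.card {e : OrbIdx τ ≃ Fin lam.length // ∀ o, H (e o) = G o} := by
    rw [Nat.card_eq_fintype_card, youngChar, ← Finset.card_univ]
    symm
    apply Finset.card_bij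
      (fun (e : {e : OrbIdx τ ≃ Fin lam.length // ∀ o, H (e o) = G o}) _ =>
        (fun j => orbSet τ (e.1.symm j)))
    · -- membership
      rintro ⟨e, he⟩ -
      rw [Finset.mem_filter]
      refine ⟨Finset.mem_univ _, fun j => ?_, fun i j hij => orbSet_disjoint τ (fun hh => hij (by
        have := congrArg e hh; simpa using this)), fun x => ?_, fun i x hx => orbSet_inv τ hx⟩
      · have h := he (e.symm j)
        rw [Equiv.apply_symm_apply] at h
        have := congrArg Fin.val h
        simpa [hG, hH] using this.symm
      · obtain ⟨o, ho⟩ := orbSet_cover τ x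
        exact ⟨e o, by simpa using ho⟩
    · -- injectivity
      rintro ⟨e, he⟩ - ⟨e', he'⟩ - h
      have h2 : ∀ j, orbSet τ (e.symm j) = orbSet τ (e'.symm j) := fun j => congrFun h j
      have h3 : e.symm = e'.symm := Equiv.ext fun j => orbSet_injective τ (h2 j)
      exact Subtype.ext (Equiv.symm_bijective.injective h3)
    · -- surjectivity
      intro P hP
      rw [Finset.mem_filter] at hP
      obtain ⟨-, hcard, hdisj, hcov, hinv⟩ := hP
      obtain ⟨F, hbi⟩ := struct τ P hdisj hcov hinv
      have hsum : ∀ j, ∑ o ∈ Finset.univ.filter (fun o => F o = j), (orbSet τ o).card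
          = lam.blocksFun j := by
        intro j
        rw [← hcard j, hbi j]
        exact (Finset.card_biUnion (fun o _ o' _ hoo => orbSet_disjoint τ hoo)).symm
      have hFsurj : Function.Surjective F := by
        intro j
        by_contra hns
        push_neg at hns
        have hemp : Finset.univ.filter (fun o => F o = j) = ∅ := by
          rw [Finset.filter_eq_empty_iff]
          exact fun {o} _ => hns o
        have h0 := hsum j
        rw [hemp] at h0
        simp at h0
        have := lam.one_le_blocksFun j
        omega
      have hFbij : Function.Bijective F := by
        rw [Fintype.bijective_iff_surjective_and_card]
        exact ⟨hFsurj, by rw [card_orbIdx hτ, Fintype.card_fin]⟩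
      set e : OrbIdx τ ≃ Fin lam.length := Equiv.ofBijective F hFbij with he
      have hfiber : ∀ o : OrbIdx τ, Finset.univ.filter (fun o' => F o' = F o) = {o} := by
        intro o
        ext o'
        simp only [Finset.mem_filter, Finset.mem_univ, true_and, Finset.mem_singleton]
        exact ⟨fun hh => hFbij.1 hh, fun hh => hh ▸ rfl⟩
      have hPF : ∀ o : OrbIdx τ, P (F o) = orbSet τ o := by
        intro o
        rw [hbi (F o), hfiber o, Finset.singleton_biUnion]
      have heE : ∀ o, H (e o) = G o := by
        intro o
        have h1 : (P (F o)).card = lam.blocksFun (F o) := hcard (F o)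
        rw [hPF o] at h1
        apply Fin.ext
        simpa [hG, hH, he, Equiv.ofBijective] using h1.symm
      refine ⟨⟨e, heE⟩, Finset.mem_univ _, ?_⟩
      funext j
      show orbSet τ (e.symm j) = P j
      have h1 : F (e.symm j) = j := by
        have := e.apply_symm_apply j
        simpa [he, Equiv.ofBijective] using this
      conv_rhs => rw [← h1]
      rw [hPF]
  rw [hyc, card_value_preserving G H hfib]
  have h3 : ∀ v : Fin (n+1), Nat.card {o // G o = v} = lam.blocks.count (v : ℕ) := by
    intro v
    rw [hGfib, card_fiber_orb hτ, card_fiber_blocksFun]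
  calc ∏ v : Fin (n+1), (Nat.card {o // G o = v})!
      = ∏ v : Fin (n+1), (lam.blocks.count ((v : ℕ)))! :=
        Finset.prod_congr rfl fun v _ => by rw [h3]
    _ = ∏ v ∈ Finset.range (n+1), (lam.blocks.count v)! :=
        Fin.prod_univ_eq_prod_range (fun v => (lam.blocks.count v)!) (n+1)
    _ = ∏ v ∈ Finset.Icc 1 n, (lam.blocks.count v)! := by
        symm
        apply Finset.prod_subset
        · intro x hx
          rw [Finset.mem_Icc] at hx
          rw [Finset.mem_range]
          omega
        · intro x hx hnx
          rw [Finset.mem_range] at hx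
          rw [Finset.mem_Icc] at hnx
          have hx0 : x = 0 := by omega
          subst hx0
          have hc0 : lam.blocks.count 0 = 0 := by
            rw [List.count_eq_zero]
            intro h0
            exact absurd (lam.blocks_pos h0) (by omega)
          simp [hc0]

end Stmt4Aux

/-- Let `λ` and `μ` be partitions of `n` (weakly decreasing compositions) and
let `σ_μ` have cycle type `μ`.  If `χ_λ(σ_μ) ≠ 0` then the parts of `μ` can be grouped so that
the sums of the groups are exactly the parts of `λ` (in particular `μ ≤ λ` lexicographically);
moreover `χ_λ` evaluated at an element of cycle type `λ` equals `t_1!·t_2!·…·t_n!` where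
`λ` has `t_i` parts equal to `i`. -/
theorem stmt4 (n : ℕ) (lam mu : Composition n)
    (hlam : lam.blocks.Pairwise (· ≥ ·)) (hmu : mu.blocks.Pairwise (· ≥ ·))
    (σ : Equiv.Perm (Fin n)) (hσ : σ.partition.parts = (mu.blocks : Multiset ℕ)) :
    (youngChar lam σ ≠ 0 →
      (∃ f : Fin mu.length → Fin lam.length,
        ∀ j, ∑ i ∈ Finset.univ.filter (fun i => f i = j), mu.blocksFun i = lam.blocksFun j) ∧
      (mu.blocks = lam.blocks ∨ List.Lex (· < ·) mu.blocks lam.blocks)) ∧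
    (∀ τ : Equiv.Perm (Fin n), τ.partition.parts = (lam.blocks : Multiset ℕ) →
      youngChar lam τ = ∏ i ∈ Finset.Icc 1 n, Nat.factorial (lam.blocks.count i)) := by
  constructor
  · intro hne
    rw [youngChar] at hne
    obtain ⟨P, hPmem⟩ := Finset.card_pos.mp (Nat.pos_of_ne_zero hne)
    rw [Finset.mem_filter] at hPmem
    obtain ⟨-, h1, h2, h3, h4⟩ := hPmem
    obtain ⟨F, hbi⟩ := Stmt4Aux.struct σ P h2 h3 h4
    have hsum : ∀ j, ∑ o ∈ Finset.univ.filter (fun o => F o = j), (Stmt4Aux.orbSet σ o).card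
        = lam.blocksFun j := by
      intro j
      rw [← h1 j, hbi j]
      exact (Finset.card_biUnion (fun o _ o' _ hoo => Stmt4Aux.orbSet_disjoint σ hoo)).symm
    obtain ⟨e, he⟩ := Stmt4Aux.exists_value_equiv mu.blocksFun
      (fun o => (Stmt4Aux.orbSet σ o).card)
      (fun v => by exact (Stmt4Aux.card_fiber_orb hσ v).symm)
    set f : Fin mu.length → Fin lam.length := fun i => F (e i) with hfdef
    have hfsum : ∀ j, ∑ i ∈ Finset.univ.filter (fun i => f i = j), mu.blocksFun i
        = lam.blocksFun j := by
      intro j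
      rw [← hsum j]
      apply Finset.sum_equiv e
      · intro i
        simp [hfdef]
      · intro i _
        rw [← he i]
    refine ⟨⟨f, hfsum⟩, ?_⟩
    apply Stmt4Aux.lemB mu.blocks lam.blocks
      ((List.finRange lam.length).map
        (fun j => ((List.finRange mu.length).filter (fun i => decide (f i = j))).map mu.blocksFun))
      (fun x hx => lam.blocks_pos hx) (fun x hx => mu.blocks_pos hx) hmu hlam
    · -- group sums give lam.blocks
      conv_rhs => rw [← List.map_get_finRange lam.blocks]
      rw [List.map_map]
      apply List.map_congr_left
      intro j _
      show (((List.finRange mu.length).filter (fun i => decide (f i = j))).map mu.blocksFun).sum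
        = lam.blocks.get j
      rw [Stmt4Aux.list_sum_filter (fun i => f i = j) mu.blocksFun, hfsum j]
      rfl
    · -- mu.blocks is a permutation of the flattened groups
      have hp := Stmt4Aux.perm_flatten_groups f mu.blocksFun
      have h5 : (List.finRange mu.length).map mu.blocksFun = mu.blocks :=
        List.map_get_finRange mu.blocks
      rwa [h5] at hp
  · intro τ hτ
    exact Stmt4Aux.count_valid lam τ hτ


end
end

section
/- The quotient Σ(n,p)/R(n,p) of the p-modular descent algebra by its Jacobson radical is commutative; equivalently, for all x, y ∈ Σ(n,p), the commutator xy − yx lies in R(n,p). -/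
open scoped Classical

set_option synthInstance.maxHeartbeats 1000000
set_option maxHeartbeats 1000000

noncomputable section

namespace SolAux

open Finset

variable {n : ℕ}

/-- fiber sizes of a coloring -/
def fib {L : Type} [Fintype L] (H : Fin n → L) : L → ℕ :=
  fun l => (univ.filter fun v => H v = l).card

lemma fib_comp_equiv {L : Type} [Fintype L] (H : Fin n → L) (e : Fin n ≃ Fin n) :
    fib (H ∘ e) = fib H := by
  funext l
  apply Finset.card_nbij (i := e)
  · intro v hv
    simp only [Finset.mem_coe, mem_filter, mem_univ, true_and, Function.comp] at hv ⊢
    exact hv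
  · intro v _ w _ h
    exact e.injective h
  · intro w hw
    simp only [Finset.coe_filter, mem_univ, true_and, Set.mem_setOf_eq] at hw
    refine ⟨e.symm w, ?_, by simp⟩
    simp only [Finset.coe_filter, mem_univ, true_and, Set.mem_setOf_eq, Function.comp]
    simpa using hw

lemma fib_comp_equiv' {L L' : Type} [Fintype L] [Fintype L'] (H : Fin n → L) (e : L ≃ L') (l : L') :
    fib (fun v => e (H v)) l = fib H (e.symm l) := by
  unfold fib
  congr 1
  apply Finset.filter_congr
  intro v _
  simp [Equiv.eq_symm_apply, eq_comm]

lemma fib_ext {L M : Type} [Fintype L] [Fintype M] (H : Fin n → L) (l : L)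
    (G : Fin n → M) (m : M) (h : ∀ v, H v = l ↔ G v = m) : fib H l = fib G m := by
  unfold fib
  congr 1
  ext v
  simp only [mem_filter, mem_univ, true_and]
  exact h v

lemma fib_eq_zero_iff {L : Type} [Fintype L] (H : Fin n → L) (l : L) :
    fib H l = 0 ↔ ∀ v, H v ≠ l := by
  unfold fib
  rw [Finset.card_eq_zero, Finset.filter_eq_empty_iff]
  simp

lemma fib_sum {L : Type} [Fintype L] (H : Fin n → L) : ∑ l, fib H l = n := by
  have := Finset.card_eq_sum_card_fiberwise (f := H) (s := univ) (t := univ)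
    (fun v _ => mem_univ (H v))
  simpa [fib] using this.symm

lemma ofFn_perm_of_fib_eq {L : Type} [Fintype L] {H1 H2 : Fin n → L}
    (h : fib H1 = fib H2) : (List.ofFn H1).Perm (List.ofFn H2) := by
  rw [← Multiset.coe_eq_coe, ← Fin.univ_val_map, ← Fin.univ_val_map]
  ext l
  rw [Multiset.count_map, Multiset.count_map]
  have key : ∀ (H : Fin n → L),
      Multiset.card (Multiset.filter (fun a => l = H a) univ.val) = fib H l := by
    intro H
    unfold fib
    rw [Finset.card_def, Finset.filter_val]
    congr 1
    apply Multiset.filter_congr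
    intro x _
    exact eq_comm
  rw [key, key, h]

lemma monotone_unique {L : Type} [Fintype L] [LinearOrder L] {H1 H2 : Fin n → L}
    (m1 : Monotone H1) (m2 : Monotone H2) (h : fib H1 = fib H2) : H1 = H2 :=
  List.ofFn_injective <|
    (ofFn_perm_of_fib_eq h).eq_of_pairwise' m1.sortedLE_ofFn.pairwise m2.sortedLE_ofFn.pairwise

lemma sort_strict {L : Type} [LinearOrder L] (f : Fin n → L) {i j : Fin n} (hij : i < j)
    (hf : f (Tuple.sort f i) = f (Tuple.sort f j)) : Tuple.sort f i < Tuple.sort f j :=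
  (Tuple.eq_sort_iff.mp rfl).2 i j hij hf

lemma index_monotone (c : Composition n) : Monotone c.index := by
  intro a b hab
  by_contra hlt
  push_neg at hlt
  have h1 : c.sizeUpTo ((c.index b : ℕ) + 1) ≤ c.sizeUpTo (c.index a) :=
    c.monotone_sizeUpTo (by exact_mod_cast hlt)
  have h2 := c.lt_sizeUpTo_index_succ b
  have h3 := c.sizeUpTo_index_le a
  simp only [Fin.val_succ] at h2
  have : (a : ℕ) ≤ b := hab
  omega

lemma index_eq_iff (c : Composition n) (j : Fin n) (i : Fin c.length) :
    c.index j = i ↔ c.sizeUpTo i ≤ (j : ℕ) ∧ (j : ℕ) < c.sizeUpTo ((i : ℕ) + 1) := by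
  constructor
  · rintro rfl
    refine ⟨c.sizeUpTo_index_le j, ?_⟩
    have := c.lt_sizeUpTo_index_succ j
    simpa [Fin.val_succ] using this
  · rintro ⟨h1, h2⟩
    by_contra hne
    rcases lt_or_gt_of_ne hne with hlt | hgt
    · have : c.sizeUpTo ((c.index j : ℕ) + 1) ≤ c.sizeUpTo i := c.monotone_sizeUpTo (by exact_mod_cast hlt)
      have h2' := c.lt_sizeUpTo_index_succ j
      simp only [Fin.val_succ] at h2'
      omega
    · have : c.sizeUpTo ((i : ℕ) + 1) ≤ c.sizeUpTo (c.index j) := c.monotone_sizeUpTo (by exact_mod_cast hgt)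
      have h3 := c.sizeUpTo_index_le j
      omega

lemma fib_index (c : Composition n) : fib c.index = c.blocksFun := by
  funext i
  unfold fib
  have h2 : (Finset.Ico (c.sizeUpTo i) (c.sizeUpTo ((i : ℕ) + 1))).card = c.blocksFun i := by
    rw [Nat.card_Ico, c.sizeUpTo_succ' i]
    omega
  rw [← h2]
  apply Finset.card_nbij (i := fun v : Fin n => (v : ℕ))
  · intro v hv
    have hv' : c.index v = i := by simpa using hv
    rw [index_eq_iff] at hv'
    simpa [Finset.mem_Ico] using hv'
  · intro v _ w _ hvw
    exact Fin.val_injective hvw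
  · intro k hk
    simp only [Finset.coe_Ico, Set.mem_Ico] at hk
    have hkn : k < n := lt_of_lt_of_le hk.2 (c.sizeUpTo_le _)
    refine ⟨⟨k, hkn⟩, ?_, rfl⟩
    simp only [Finset.mem_coe, Finset.mem_filter]
    exact ⟨mem_univ _, by rw [index_eq_iff]; exact hk⟩

lemma mem_pps_iff_index_ne (c : Composition n) (k : ℕ) (h0 : 0 < k) (h : k < n) :
    k ∈ properPartialSums c ↔ c.index ⟨k - 1, by omega⟩ ≠ c.index ⟨k, h⟩ := by
  constructor
  · rintro ⟨i, hi0, hil, rfl⟩ heq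
    -- k = sizeUpTo i
    have hile : i ≤ (c.index ⟨c.sizeUpTo i, h⟩ : ℕ) := by
      by_contra hlt
      push_neg at hlt
      have : c.sizeUpTo ((c.index ⟨c.sizeUpTo i, h⟩ : ℕ) + 1) ≤ c.sizeUpTo i :=
        c.monotone_sizeUpTo hlt
      have h2 := c.lt_sizeUpTo_index_succ ⟨c.sizeUpTo i, h⟩
      simp only [Fin.val_succ] at h2
      omega
    have hlt2 : (c.index ⟨c.sizeUpTo i - 1, by omega⟩ : ℕ) < i := by
      by_contra hge
      push_neg at hge
      have : c.sizeUpTo i ≤ c.sizeUpTo (c.index ⟨c.sizeUpTo i - 1, by omega⟩) :=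
        c.monotone_sizeUpTo hge
      have h3 := c.sizeUpTo_index_le (⟨c.sizeUpTo i - 1, by omega⟩ : Fin n)
      simp only at h3
      omega
    rw [heq] at hlt2
    omega
  · intro hne
    set i := c.index ⟨k, h⟩ with hi
    have hle : c.index ⟨k - 1, by omega⟩ ≤ i := index_monotone c (by simp only [Fin.mk_le_mk]; omega)
    have hlt : (c.index ⟨k - 1, by omega⟩ : ℕ) < (i : ℕ) := by
      rcases lt_or_eq_of_le hle with h' | h'
      · exact h'
      · exact absurd h' hne
    refine ⟨(i : ℕ), by omega, i.2, ?_⟩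
    have h1 : c.sizeUpTo i ≤ k := c.sizeUpTo_index_le ⟨k, h⟩
    have h2 : k - 1 < c.sizeUpTo ((c.index ⟨k - 1, by omega⟩ : ℕ) + 1) := by
      have := c.lt_sizeUpTo_index_succ (⟨k - 1, by omega⟩ : Fin n)
      simpa [Fin.val_succ] using this
    have h3 : c.sizeUpTo ((c.index ⟨k - 1, by omega⟩ : ℕ) + 1) ≤ c.sizeUpTo i :=
      c.monotone_sizeUpTo (by omega)
    omega

lemma descSet_subset_iff (c : Composition n) (σ : Equiv.Perm (Fin n)) :
    descSet σ ⊆ properPartialSums c ↔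
      ∀ v w : Fin n, v < w → c.index v = c.index w → σ v < σ w := by
  constructor
  · intro hsub
    have adj : ∀ (k : ℕ) (h : k + 1 < n), c.index ⟨k, by omega⟩ = c.index ⟨k + 1, h⟩ →
        σ ⟨k, by omega⟩ < σ ⟨k + 1, h⟩ := by
      intro k h heq
      by_contra hge
      push_neg at hge
      have hne : σ ⟨k + 1, h⟩ ≠ σ ⟨k, by omega⟩ := by
        intro hh
        have := σ.injective hh
        simp [Fin.ext_iff] at this
      have hlt : σ ⟨k + 1, h⟩ < σ ⟨k, by omega⟩ := lt_of_le_of_ne hge hne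
      have hk : (k + 1) ∈ descSet σ := ⟨h, by omega, hlt⟩
      have hmem := hsub hk
      rw [mem_pps_iff_index_ne c (k+1) (by omega) h] at hmem
      exact hmem heq
    have main : ∀ (m a : ℕ) (ha : a < n) (hb : a + m + 1 < n),
        c.index ⟨a, ha⟩ = c.index ⟨a + m + 1, hb⟩ → σ ⟨a, ha⟩ < σ ⟨a + m + 1, hb⟩ := by
      intro m
      induction m with
      | zero => intro a ha hb hidx; exact adj a hb hidx
      | succ m ih =>
        intro a ha hb hidx
        have hu : a + m + 1 < n := by omega
        have l1 : c.index ⟨a, ha⟩ ≤ c.index ⟨a + m + 1, hu⟩ :=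
          index_monotone c (by simp only [Fin.mk_le_mk]; omega)
        have l2 : c.index ⟨a + m + 1, hu⟩ ≤ c.index ⟨a + (m + 1) + 1, hb⟩ :=
          index_monotone c (by simp only [Fin.mk_le_mk]; omega)
        have hequ : c.index ⟨a, ha⟩ = c.index ⟨a + m + 1, hu⟩ :=
          le_antisymm l1 (hidx ▸ l2)
        have s1 : σ ⟨a, ha⟩ < σ ⟨a + m + 1, hu⟩ := ih a ha hu hequ
        have s2 : σ ⟨a + m + 1, hu⟩ < σ ⟨a + (m + 1) + 1, hb⟩ := by
          have hb' : (a + m + 1) + 1 < n := by omega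
          have heq2 : c.index ⟨a + m + 1, hu⟩ = c.index ⟨(a + m + 1) + 1, hb'⟩ := by
            rw [hequ] at hidx
            exact hidx
          exact adj (a + m + 1) hb' heq2
        exact s1.trans s2
    intro v w hvw heq
    rcases v with ⟨a, ha⟩
    rcases w with ⟨b, hb⟩
    have hab : a < b := hvw
    obtain ⟨m, rfl⟩ : ∃ m, b = a + m + 1 := ⟨b - a - 1, by omega⟩
    exact main m a ha hb heq
  · intro hmono k hk
    obtain ⟨h, h0, hlt⟩ := hk
    rw [mem_pps_iff_index_ne c k h0 h]
    intro heq
    have := hmono ⟨k - 1, by omega⟩ ⟨k, h⟩ (by simp only [Fin.mk_lt_mk]; omega) heq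
    exact absurd hlt (not_lt.2 this.le)


section GEN

variable {p : ℕ}

lemma fib_phi_index {L : Type} [Fintype L] [LinearOrder L] (Z : L → ℕ) (c : Composition n)
    (φ : Fin c.length → L) (hmono : StrictMono φ) (hval : ∀ i, Z (φ i) = c.blocksFun i)
    (hsupp : ∀ l, Z l ≠ 0 → ∃ i, φ i = l) :
    fib (fun v => φ (c.index v)) = Z := by
  funext l
  by_cases hl : ∃ i, φ i = l
  · obtain ⟨i, rfl⟩ := hl
    have h1 : fib (fun v => φ (c.index v)) (φ i) = fib c.index i :=
      fib_ext _ _ _ _ (fun v => by simp [hmono.injective.eq_iff])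
    rw [h1, fib_index, hval]
  · have h0 : Z l = 0 := by
      by_contra h
      exact hl (hsupp l h)
    rw [h0, fib_eq_zero_iff]
    intro v hc
    exact hl ⟨c.index v, hc⟩

lemma comp_sort_eq {L : Type} [Fintype L] [LinearOrder L] (Z : L → ℕ) (c : Composition n)
    (φ : Fin c.length → L) (hmono : StrictMono φ) (hval : ∀ i, Z (φ i) = c.blocksFun i)
    (hsupp : ∀ l, Z l ≠ 0 → ∃ i, φ i = l) (H : Fin n → L) (hH : fib H = Z) :
    H ∘ ⇑(Tuple.sort H) = fun v => φ (c.index v) := by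
  apply monotone_unique (Tuple.monotone_sort H)
    ((hmono.monotone).comp (index_monotone c))
  rw [fib_comp_equiv H (Tuple.sort H), hH]
  exact (fib_phi_index Z c φ hmono hval hsupp).symm

lemma gen {L : Type} [Fintype L] [LinearOrder L] (Z : L → ℕ) (c : Composition n)
    (φ : Fin c.length → L) (hmono : StrictMono φ) (hval : ∀ i, Z (φ i) = c.blocksFun i)
    (hsupp : ∀ l, Z l ≠ 0 → ∃ i, φ i = l) :
    ∑ H ∈ Finset.univ.filter (fun H : Fin n → L => fib H = Z),
        MonoidAlgebra.of (ZMod p) (Equiv.Perm (Fin n)) (Tuple.sort H)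
      = Bel n p c := by
  rw [Bel]
  apply Finset.sum_nbij' (i := fun H => Tuple.sort H)
    (j := fun σ => fun v => φ (c.index (σ.symm v)))
  · -- sort H has descents in c
    intro H hH
    simp only [mem_filter, mem_univ, true_and] at hH ⊢
    rw [descSet_subset_iff]
    intro v w hvw heq
    have key := comp_sort_eq Z c φ hmono hval hsupp H hH
    have : H (Tuple.sort H v) = H (Tuple.sort H w) := by
      have hv := congrFun key v
      have hw := congrFun key w
      simp only [Function.comp_apply] at hv hw
      rw [hv, hw, heq]
    exact sort_strict H hvw this
  · -- j lands in fib = Z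
    intro σ hσ
    simp only [mem_filter, mem_univ, true_and]
    have : (fun v => φ (c.index (σ.symm v))) = (fun v => φ (c.index v)) ∘ ⇑(σ.symm : Equiv.Perm (Fin n)) := rfl
    rw [this, fib_comp_equiv, fib_phi_index Z c φ hmono hval hsupp]
  · -- j (i H) = H
    intro H hH
    simp only [mem_filter, mem_univ, true_and] at hH
    have key := comp_sort_eq Z c φ hmono hval hsupp H hH
    funext v
    have := congrFun key ((Tuple.sort H).symm v)
    simp only [Function.comp_apply, Equiv.apply_symm_apply] at this
    exact this.symm
  · -- i (j σ) = σ
    intro σ hσ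
    simp only [mem_filter, mem_univ, true_and] at hσ
    rw [descSet_subset_iff] at hσ
    symm
    rw [Tuple.eq_sort_iff]
    constructor
    · intro x y hxy
      simp only [Function.comp_apply, Equiv.symm_apply_apply]
      exact (hmono.monotone).comp (index_monotone c) hxy
    · intro x y hxy hf
      simp only [Function.comp_apply, Equiv.symm_apply_apply] at hf
      exact hσ x y hxy (hmono.injective hf)
  · intro H _
    rfl

/-- base case: Bel as a sum over colorings -/
lemma bel_eq_sum_colorings (c : Composition n) :
    Bel n p c = ∑ f ∈ Finset.univ.filter
        (fun f : Fin n → Fin c.length => fib f = c.blocksFun),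
      MonoidAlgebra.of (ZMod p) (Equiv.Perm (Fin n)) (Tuple.sort f) := by
  refine (gen c.blocksFun c id strictMono_id (fun i => rfl) (fun l _ => ⟨l, rfl⟩)).symm

end GEN

section PSL

lemma sort_mul_sort {A B : Type} [LinearOrder A] [LinearOrder B]
    (f : Fin n → B) (g : Fin n → A) :
    Tuple.sort (fun v => toLex ((g ((Tuple.sort f).symm v)), f v) : Fin n → A ×ₗ B)
      = Tuple.sort f * Tuple.sort g := by
  symm
  rw [Tuple.eq_sort_iff]
  constructor
  · intro x y hxy
    rcases eq_or_lt_of_le hxy with rfl | hlt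
    · exact le_rfl
    simp only [Function.comp_apply, Equiv.Perm.mul_apply, Equiv.symm_apply_apply]
    rw [Prod.Lex.le_iff]
    rcases eq_or_lt_of_le (Tuple.monotone_sort g hxy) with heq | hlt2
    · right
      refine ⟨heq, ?_⟩
      have : Tuple.sort g x < Tuple.sort g y := sort_strict g hlt heq
      exact Tuple.monotone_sort f this.le
    · left; exact hlt2
  · intro x y hxy hf
    simp only [Equiv.Perm.mul_apply, Equiv.symm_apply_apply] at hf ⊢
    have h1 : g (Tuple.sort g x) = g (Tuple.sort g y) := congrArg (fun z => (ofLex z).1) hf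
    have h2 : f (Tuple.sort f (Tuple.sort g x)) = f (Tuple.sort f (Tuple.sort g y)) :=
      congrArg (fun z => (ofLex z).2) hf
    have hg : Tuple.sort g x < Tuple.sort g y := sort_strict g hxy h1
    exact sort_strict f hg h2

end PSL

section CMP

variable {L : Type} [Fintype L] [LinearOrder L]

lemma list_sum_filter_ne_zero (l : List ℕ) : (l.filter (· ≠ 0)).sum = l.sum := by
  induction l with
  | nil => rfl
  | cons a t ih =>
    by_cases h : a = 0
    · subst h
      rw [List.filter_cons_of_neg (by simp), List.sum_cons, ih, Nat.zero_add]
    · rw [List.filter_cons_of_pos (by simpa using h), List.sum_cons, List.sum_cons, ih]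

/-- the list of nonzero values of `Z` in the order of `L` -/
def cmpList (Z : L → ℕ) : List ℕ := ((univ.sort (· ≤ ·)).map Z).filter (· ≠ 0)

lemma cmpList_sum (Z : L → ℕ) : (cmpList Z).sum = ∑ l, Z l := by
  unfold cmpList
  rw [list_sum_filter_ne_zero]
  have h1 : (((univ.sort (· ≤ ·)).map Z : List ℕ) : Multiset ℕ) = (univ.val.map Z) := by
    rw [← Finset.sort_eq univ (· ≤ ·)]; rfl
  calc ((univ.sort (· ≤ ·)).map Z).sum
      = (((univ.sort (· ≤ ·)).map Z : List ℕ) : Multiset ℕ).sum := (Multiset.sum_coe _).symm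
    _ = ((univ.val.map Z) : Multiset ℕ).sum := by rw [h1]
    _ = ∑ l, Z l := rfl

lemma cmpList_length (Z : L → ℕ) :
    (cmpList Z).length = (univ.filter (fun l => Z l ≠ 0)).card := by
  unfold cmpList
  rw [← List.countP_eq_length_filter]
  have h1 : (((univ.sort (· ≤ ·)).map Z : List ℕ) : Multiset ℕ) = (univ.val.map Z) := by
    rw [← Finset.sort_eq univ (· ≤ ·)]; rfl
  calc ((univ.sort (· ≤ ·)).map Z).countP (· ≠ 0)
      = Multiset.countP (fun x => x ≠ 0) (((univ.sort (· ≤ ·)).map Z : List ℕ) : Multiset ℕ) := by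
        rw [Multiset.coe_countP]
    _ = Multiset.countP (fun x => x ≠ 0) (univ.val.map Z) := by rw [h1]
    _ = Multiset.card (Multiset.filter (fun x => x ≠ 0) (univ.val.map Z)) := by
        rw [Multiset.countP_eq_card_filter]
    _ = Multiset.card (Multiset.map Z (Multiset.filter (fun l => Z l ≠ 0) univ.val)) := by
        rw [Multiset.filter_map]; rfl
    _ = (univ.filter (fun l => Z l ≠ 0)).card := by
        rw [Multiset.card_map]; rfl

lemma cmpList_perm {L' : Type} [Fintype L'] [LinearOrder L'] (Z : L → ℕ) (e : L' ≃ L) :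
    (cmpList (Z ∘ e)).Perm (cmpList Z) := by
  unfold cmpList
  apply List.Perm.filter
  have h2 : ((univ.sort (· ≤ ·)).map (Z ∘ e)) = (((univ.sort (· ≤ ·)).map e).map Z) := by
    rw [List.map_map]
  rw [h2]
  apply List.Perm.map
  rw [← Multiset.coe_eq_coe]
  have h3 : (((univ.sort (· ≤ ·) : List L').map e : List L) : Multiset L) = (univ.val.map e) := by
    rw [← Finset.sort_eq (univ : Finset L') (· ≤ ·)]; rfl
  rw [h3]
  have h4 : ((univ.sort (· ≤ ·) : List L) : Multiset L) = univ.val := Finset.sort_eq _ _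
  rw [h4]
  have := Finset.map_univ_equiv e
  calc Multiset.map (⇑e) univ.val = (Finset.map e.toEmbedding univ).val := rfl
    _ = (univ : Finset L).val := by rw [this]

/-- the composition of `n` given by the nonzero values of `Z` -/
def cmpOf (Z : L → ℕ) : Composition n :=
  if h : (cmpList Z).sum = n then
    ⟨cmpList Z, by
      intro i hi
      unfold cmpList at hi
      rw [List.mem_filter] at hi
      have := hi.2
      simp only [ne_eq, decide_not] at this
      rcases Nat.eq_zero_or_pos i with h0 | h0
      · rw [h0] at this; simp at this
      · exact h0, h⟩
  else Composition.ones n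

lemma cmpOf_blocks (Z : L → ℕ) (h : (cmpList Z).sum = n) :
    (cmpOf Z : Composition n).blocks = cmpList Z := by
  unfold cmpOf
  rw [dif_pos h]

lemma cmpOf_length (Z : L → ℕ) (h : (cmpList Z).sum = n) :
    (cmpOf Z : Composition n).length = (univ.filter (fun l => Z l ≠ 0)).card := by
  rw [← Composition.blocks_length, cmpOf_blocks Z h, cmpList_length]

lemma cmpOf_rel (Z : L → ℕ) (h : (cmpList Z).sum = n) :
    ∃ φ : Fin (cmpOf Z : Composition n).length → L, StrictMono φ ∧
      (∀ i, Z (φ i) = (cmpOf Z : Composition n).blocksFun i) ∧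
      (∀ l, Z l ≠ 0 → ∃ i, φ i = l) := by
  classical
  set ss : List L := (univ.sort (· ≤ ·)).filter (fun l => Z l ≠ 0) with hss
  have key : cmpList Z = ss.map Z := by
    unfold cmpList
    rw [List.filter_map]
    rfl
  have lenE : (cmpOf Z : Composition n).length = ss.length := by
    rw [← Composition.blocks_length, cmpOf_blocks Z h, key, List.length_map]
  have sorted : ss.Pairwise (· < ·) := (Finset.sortedLT_sort univ).pairwise.filter _
  refine ⟨fun i => ss.get (Fin.cast lenE i), ?_, ?_, ?_⟩
  · intro i j hij
    exact List.pairwise_iff_get.1 sorted _ _ (by simpa using hij)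
  · intro i
    have : (cmpOf Z : Composition n).blocksFun i
        = (cmpOf Z : Composition n).blocks.get (Fin.cast (Composition.blocks_length _).symm i) := rfl
    rw [this]
    have hb : (cmpOf Z : Composition n).blocks = ss.map Z := by rw [cmpOf_blocks Z h, key]
    rw [List.get_of_eq hb]
    simp [List.getElem_map]
  · intro l hl
    have hmem : l ∈ ss := by
      rw [hss, List.mem_filter]
      exact ⟨(Finset.mem_sort _).2 (mem_univ l), by simpa using hl⟩
    obtain ⟨j, hj⟩ := List.mem_iff_get.1 hmem
    exact ⟨Fin.cast lenE.symm j, by simpa using hj⟩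

end CMP

section MSL

variable {p : ℕ}

/-- marginal sums condition -/
def margins (q r : Composition n) (Z : (Fin r.length ×ₗ Fin q.length) → ℕ) : Prop :=
  (∀ a : Fin r.length, ∑ b, Z (toLex (a, b)) = r.blocksFun a) ∧
  (∀ b : Fin q.length, ∑ a, Z (toLex (a, b)) = q.blocksFun b)

def HSet (q r : Composition n) : Finset (Fin n → (Fin r.length ×ₗ Fin q.length)) :=
  univ.filter (fun H => margins q r (fib H))

def MG (q r : Composition n) : Finset ((Fin r.length ×ₗ Fin q.length) → ℕ) :=
  (HSet q r).image fib

lemma fib_fst {A B : Type} [Fintype A] [Fintype B] (X : Fin n → A ×ₗ B) (a : A) :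
    ∑ b, fib X (toLex (a, b)) = fib (fun v => (ofLex (X v)).1) a := by
  have hcard := Finset.card_eq_sum_card_fiberwise
    (s := univ.filter (fun v => (ofLex (X v)).1 = a)) (t := (univ : Finset B))
    (f := fun v => (ofLex (X v)).2) (fun v _ => mem_univ _)
  unfold fib
  rw [hcard]
  apply Finset.sum_congr rfl
  intro b _
  congr 1
  rw [Finset.filter_filter]
  ext v
  simp only [mem_filter, mem_univ, true_and]
  constructor
  · intro hv
    rw [hv]
    exact ⟨rfl, rfl⟩
  · rintro ⟨h1, h2⟩
    have h3 : ofLex (X v) = (a, b) := Prod.ext h1 h2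
    calc X v = toLex (ofLex (X v)) := rfl
      _ = toLex ((a, b) : A × B) := by rw [h3]

lemma fib_snd {A B : Type} [Fintype A] [Fintype B] (X : Fin n → A ×ₗ B) (b : B) :
    ∑ a, fib X (toLex (a, b)) = fib (fun v => (ofLex (X v)).2) b := by
  have hcard := Finset.card_eq_sum_card_fiberwise
    (s := univ.filter (fun v => (ofLex (X v)).2 = b)) (t := (univ : Finset A))
    (f := fun v => (ofLex (X v)).1) (fun v _ => mem_univ _)
  unfold fib
  rw [hcard]
  apply Finset.sum_congr rfl
  intro a _
  congr 1
  rw [Finset.filter_filter]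
  ext v
  simp only [mem_filter, mem_univ, true_and]
  constructor
  · intro hv
    rw [hv]
    exact ⟨rfl, rfl⟩
  · rintro ⟨h1, h2⟩
    have h3 : ofLex (X v) = (a, b) := Prod.ext h2 h1
    calc X v = toLex (ofLex (X v)) := rfl
      _ = toLex ((a, b) : A × B) := by rw [h3]

lemma sum_lex {a b : ℕ} (Z : (Fin a ×ₗ Fin b) → ℕ) :
    ∑ l, Z l = ∑ x : Fin a, ∑ y : Fin b, Z (toLex (x, y)) := by
  have h1 : ∑ xy : Fin a × Fin b, Z (toLex xy) = ∑ x : Fin a, ∑ y : Fin b, Z (toLex (x, y)) :=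
    Fintype.sum_prod_type _
  rw [← h1]
  exact Fintype.sum_equiv (toLex (α := Fin a × Fin b)).symm _ _ (fun l => by simp)

lemma mg_sum {q r : Composition n} {Z : (Fin r.length ×ₗ Fin q.length) → ℕ}
    (hZ : Z ∈ MG q r) : (cmpList Z).sum = n := by
  obtain ⟨H, hH, rfl⟩ := Finset.mem_image.1 hZ
  rw [cmpList_sum, fib_sum]

lemma mg_margins {q r : Composition n} {Z : (Fin r.length ×ₗ Fin q.length) → ℕ}
    (hZ : Z ∈ MG q r) : margins q r Z := by
  obtain ⟨H, hH, rfl⟩ := Finset.mem_image.1 hZ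
  exact (Finset.mem_filter.1 hH).2

lemma MSL (q r : Composition n) :
    Bel n p q * Bel n p r = ∑ Z ∈ MG q r, Bel n p (cmpOf Z) := by
  rw [bel_eq_sum_colorings q, bel_eq_sum_colorings r, Finset.sum_mul_sum]
  have step2 : ∀ (f : Fin n → Fin q.length) (g : Fin n → Fin r.length),
      (MonoidAlgebra.of (ZMod p) (Equiv.Perm (Fin n)) (Tuple.sort f)) *
        (MonoidAlgebra.of (ZMod p) (Equiv.Perm (Fin n)) (Tuple.sort g))
      = MonoidAlgebra.of (ZMod p) (Equiv.Perm (Fin n)) (Tuple.sort f * Tuple.sort g) :=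
    fun f g => (map_mul (MonoidAlgebra.of (ZMod p) (Equiv.Perm (Fin n))) _ _).symm
  simp only [step2]
  rw [← Finset.sum_product']
  -- step 4 : bijection with HSet
  have step4 : ∑ x ∈ (univ.filter fun f : Fin n → Fin q.length => fib f = q.blocksFun) ×ˢ
        (univ.filter fun g : Fin n → Fin r.length => fib g = r.blocksFun),
      MonoidAlgebra.of (ZMod p) (Equiv.Perm (Fin n)) (Tuple.sort x.1 * Tuple.sort x.2)
      = ∑ H ∈ HSet q r, MonoidAlgebra.of (ZMod p) (Equiv.Perm (Fin n)) (Tuple.sort H) := by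
    apply Finset.sum_nbij'
      (i := fun x : (Fin n → Fin q.length) × (Fin n → Fin r.length) =>
        (fun v => toLex ((x.2 (((Tuple.sort x.1).symm) v)), x.1 v) :
          Fin n → Fin r.length ×ₗ Fin q.length))
      (j := fun H : Fin n → Fin r.length ×ₗ Fin q.length =>
        ((fun v => (ofLex (H v)).2 : Fin n → Fin q.length),
         (fun u => (ofLex (H (Tuple.sort (fun v => (ofLex (H v)).2) u))).1 : Fin n → Fin r.length)))
    · rintro ⟨f, g⟩ hx
      rw [Finset.mem_product] at hx
      obtain ⟨hf, hg⟩ := hx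
      simp only [mem_filter, mem_univ, true_and] at hf hg
      refine Finset.mem_filter.2 ⟨mem_univ _, ?_, ?_⟩
      · intro a
        rw [fib_fst]
        show fib (g ∘ ⇑((Tuple.sort f).symm : Equiv.Perm (Fin n))) a = r.blocksFun a
        rw [fib_comp_equiv g ((Tuple.sort f).symm : Equiv.Perm (Fin n)), hg]
      · intro b
        rw [fib_snd]
        show fib f b = q.blocksFun b
        rw [hf]
    · intro H hH
      obtain ⟨-, h1, h2⟩ := Finset.mem_filter.1 hH
      rw [Finset.mem_product]
      constructor
      · refine Finset.mem_filter.2 ⟨mem_univ _, ?_⟩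
        show fib (fun v => (ofLex (H v)).2) = q.blocksFun
        funext b
        rw [← fib_snd]
        exact h2 b
      · refine Finset.mem_filter.2 ⟨mem_univ _, ?_⟩
        show fib ((fun v => (ofLex (H v)).1) ∘ ⇑(Tuple.sort (fun v => (ofLex (H v)).2))) = r.blocksFun
        rw [fib_comp_equiv]
        funext a
        rw [← fib_fst]
        exact h1 a
    · rintro ⟨f, g⟩ _
      refine Prod.ext rfl ?_
      show (fun u => (ofLex ((fun v => toLex ((g ((Tuple.sort f).symm v)), f v))
          (Tuple.sort (fun v => (ofLex ((fun v => toLex ((g ((Tuple.sort f).symm v)), f v)) v)).2) u))).1) = g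
      funext u
      show g ((Tuple.sort f).symm (Tuple.sort f u)) = g u
      rw [Equiv.symm_apply_apply]
    · intro H _
      funext v
      show toLex (((ofLex (H (Tuple.sort (fun v => (ofLex (H v)).2)
        ((Tuple.sort (fun v => (ofLex (H v)).2)).symm v)))).1), (ofLex (H v)).2) = H v
      rw [Equiv.apply_symm_apply]
      rfl
    · rintro ⟨f, g⟩ _
      show MonoidAlgebra.of (ZMod p) (Equiv.Perm (Fin n)) (Tuple.sort f * Tuple.sort g) = _
      rw [← sort_mul_sort f g]
  rw [step4]
  -- step 5/6 : fiberwise grouping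
  rw [← Finset.sum_fiberwise_of_maps_to (g := fib) (t := MG q r)
    (fun H hH => Finset.mem_image_of_mem fib hH)]
  apply Finset.sum_congr rfl
  intro Z hZ
  have hfil : (HSet q r).filter (fun H => fib H = Z) = univ.filter (fun H => fib H = Z) := by
    ext H
    simp only [HSet, Finset.filter_filter, mem_filter, mem_univ, true_and]
    constructor
    · exact fun h => h.2
    · intro h
      refine ⟨?_, h⟩
      rw [h]
      exact mg_margins hZ
  rw [hfil]
  -- step 7 : apply gen
  have hsum : (cmpList Z).sum = n := mg_sum hZ
  obtain ⟨φ, hmono, hval, hsupp⟩ := cmpOf_rel Z hsum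
  exact gen Z (cmpOf Z) φ hmono hval hsupp

end MSL

section PERM

lemma perm_get_equiv {l l' : List ℕ} (h : l.Perm l') :
    ∃ e : Fin l'.length ≃ Fin l.length, ∀ i, l.get (e i) = l'.get i := by
  have hlen : l'.length = l.length := h.length_eq.symm
  have p1 : (List.ofFn (l.get ∘ ⇑(Tuple.sort l.get))).Perm l := by
    have h0 := Equiv.Perm.ofFn_comp_perm (Tuple.sort l.get) l.get
    rwa [List.ofFn_get] at h0
  have p2 : (List.ofFn (l'.get ∘ ⇑(Tuple.sort l'.get))).Perm l' := by
    have h0 := Equiv.Perm.ofFn_comp_perm (Tuple.sort l'.get) l'.get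
    rwa [List.ofFn_get] at h0
  have hperm : (List.ofFn (l.get ∘ ⇑(Tuple.sort l.get))).Perm
      (List.ofFn (l'.get ∘ ⇑(Tuple.sort l'.get))) := (p1.trans h).trans p2.symm
  have heq : List.ofFn (l.get ∘ ⇑(Tuple.sort l.get)) = List.ofFn (l'.get ∘ ⇑(Tuple.sort l'.get)) :=
    hperm.eq_of_pairwise' (Tuple.monotone_sort _).sortedLE_ofFn.pairwise
      (Tuple.monotone_sort _).sortedLE_ofFn.pairwise
  have key : ∀ (a : Fin l.length) (b : Fin l'.length), (a : ℕ) = (b : ℕ) →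
      l.get ((Tuple.sort l.get) a) = l'.get ((Tuple.sort l'.get) b) := by
    intro a b hab
    have hiv : (a : ℕ) < (List.ofFn (l.get ∘ ⇑(Tuple.sort l.get))).length := by
      rw [List.length_ofFn]; exact a.2
    have h2 := List.get_of_eq heq ⟨(a : ℕ), hiv⟩
    rw [List.get_ofFn, List.get_ofFn] at h2
    simp only [Function.comp_apply] at h2
    convert h2 using 3 <;> apply Fin.ext <;> simp [hab]
  refine ⟨(Tuple.sort l'.get).symm.trans ((finCongr hlen).trans (Tuple.sort l.get)), ?_⟩
  intro i
  show l.get ((Tuple.sort l.get) (finCongr hlen ((Tuple.sort l'.get).symm i))) = l'.get i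
  have h3 := key (finCongr hlen ((Tuple.sort l'.get).symm i)) ((Tuple.sort l'.get).symm i) (by simp)
  rw [h3, Equiv.apply_symm_apply]

lemma perm_blocksFun_equiv {q r : Composition n} (h : q.blocks.Perm r.blocks) :
    ∃ e : Fin r.length ≃ Fin q.length, ∀ i, q.blocksFun (e i) = r.blocksFun i := by
  obtain ⟨e, he⟩ := perm_get_equiv h
  exact ⟨e, he⟩

end PERM

section RELABEL

variable {p : ℕ}

/-- swap the two coordinates of a lex product -/
def swapE (A B : Type) : (A ×ₗ B) ≃ (B ×ₗ A) where
  toFun x := toLex ((ofLex x).2, (ofLex x).1)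
  invFun x := toLex ((ofLex x).2, (ofLex x).1)
  left_inv x := rfl
  right_inv x := rfl

/-- relabel the first coordinate -/
def rowE {A A' B : Type} (e : A' ≃ A) : (A' ×ₗ B) ≃ (A ×ₗ B) where
  toFun x := toLex (e (ofLex x).1, (ofLex x).2)
  invFun x := toLex (e.symm (ofLex x).1, (ofLex x).2)
  left_inv x := by simp
  right_inv x := by simp

/-- relabel the second coordinate -/
def colE {A B B' : Type} (e : B' ≃ B) : (A ×ₗ B') ≃ (A ×ₗ B) where
  toFun x := toLex ((ofLex x).1, e (ofLex x).2)
  invFun x := toLex ((ofLex x).1, e.symm (ofLex x).2)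
  left_inv x := by simp
  right_inv x := by simp

lemma fib_postcomp {L L' : Type} [Fintype L] [Fintype L'] (H : Fin n → L) (e : L ≃ L') :
    fib (fun v => e (H v)) = (fib H) ∘ ⇑e.symm := by
  funext l
  exact fib_comp_equiv' H e l

lemma mem_MG_reindex {q r q' r' : Composition n}
    (E : (Fin r'.length ×ₗ Fin q'.length) ≃ (Fin r.length ×ₗ Fin q.length))
    (hE : ∀ Z : (Fin r.length ×ₗ Fin q.length) → ℕ, margins q r Z → margins q' r' (Z ∘ ⇑E))
    {Z : (Fin r.length ×ₗ Fin q.length) → ℕ} (hZ : Z ∈ MG q r) : (Z ∘ ⇑E) ∈ MG q' r' := by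
  obtain ⟨H, hH, rfl⟩ := Finset.mem_image.1 hZ
  obtain ⟨-, hm⟩ := Finset.mem_filter.1 hH
  have key : (fib H) ∘ ⇑E = fib (fun v => E.symm (H v)) := by
    rw [fib_postcomp H E.symm]
    simp
  rw [key]
  apply Finset.mem_image_of_mem
  refine Finset.mem_filter.2 ⟨mem_univ _, ?_⟩
  rw [← key]
  exact hE _ hm

lemma sum_MG_reindex {q r q' r' : Composition n} {M : Type} [AddCommMonoid M]
    (E : (Fin r'.length ×ₗ Fin q'.length) ≃ (Fin r.length ×ₗ Fin q.length))
    (hE : ∀ Z : (Fin r.length ×ₗ Fin q.length) → ℕ, margins q r Z → margins q' r' (Z ∘ ⇑E))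
    (hE' : ∀ Z' : (Fin r'.length ×ₗ Fin q'.length) → ℕ, margins q' r' Z' → margins q r (Z' ∘ ⇑E.symm))
    (F : ((Fin r'.length ×ₗ Fin q'.length) → ℕ) → M) :
    ∑ Z' ∈ MG q' r', F Z' = ∑ Z ∈ MG q r, F (Z ∘ ⇑E) := by
  apply Finset.sum_nbij' (i := fun Z' => Z' ∘ ⇑E.symm) (j := fun Z => Z ∘ ⇑E)
  · intro Z' hZ'
    have := mem_MG_reindex (q := q') (r := r') (q' := q) (r' := r) E.symm
      (by intro Z hm; simpa using hE' Z hm) hZ'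
    simpa using this
  · intro Z hZ
    exact mem_MG_reindex E hE hZ
  · intro Z' _
    funext l
    simp
  · intro Z _
    funext l
    simp
  · intro Z' _
    congr 1
    funext l
    simp

end RELABEL

section TSPAN

variable {p : ℕ}

def Tspan (n p m : ℕ) : Submodule (ZMod p) (MonoidAlgebra (ZMod p) (Equiv.Perm (Fin n))) :=
  Submodule.span (ZMod p)
    {x | ∃ q r : Composition n, q.blocks.Perm r.blocks ∧ m ≤ r.length ∧ x = Bel n p q - Bel n p r}

lemma Tspan_antitone {n p : ℕ} {m m' : ℕ} (h : m ≤ m') : Tspan n p m' ≤ Tspan n p m := by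
  apply Submodule.span_mono
  rintro x ⟨q, r, hp, hm, rfl⟩
  exact ⟨q, r, hp, le_trans h hm, rfl⟩

lemma cmpList_sum_comp {L L' : Type} [Fintype L] [LinearOrder L] [Fintype L'] [LinearOrder L']
    (Z : L → ℕ) (e : L' ≃ L) (h : (cmpList Z).sum = n) : (cmpList (Z ∘ ⇑e)).sum = n := by
  rw [(cmpList_perm Z e).sum_eq, h]

lemma cmpOf_blocks_perm {L L' : Type} [Fintype L] [LinearOrder L] [Fintype L'] [LinearOrder L']
    (Z : L → ℕ) (e : L' ≃ L) (h : (cmpList Z).sum = n) :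
    (cmpOf Z : Composition n).blocks.Perm (cmpOf (Z ∘ ⇑e) : Composition n).blocks := by
  rw [cmpOf_blocks Z h, cmpOf_blocks (Z ∘ ⇑e) (cmpList_sum_comp Z e h)]
  exact (cmpList_perm Z e).symm

lemma cmpOf_length_comp {L L' : Type} [Fintype L] [LinearOrder L] [Fintype L'] [LinearOrder L']
    (Z : L → ℕ) (e : L' ≃ L) (h : (cmpList Z).sum = n) :
    (cmpOf (Z ∘ ⇑e) : Composition n).length = (cmpOf Z : Composition n).length := by
  rw [← Composition.blocks_length, ← Composition.blocks_length]
  exact ((cmpOf_blocks_perm Z e h).length_eq).symm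

lemma bel_cmp_diff_mem {L L' : Type} [Fintype L] [LinearOrder L] [Fintype L'] [LinearOrder L']
    (Z : L → ℕ) (e : L' ≃ L) (h : (cmpList Z).sum = n) {m : ℕ}
    (hm : m ≤ (cmpOf (Z ∘ ⇑e) : Composition n).length) :
    Bel n p (cmpOf Z) - Bel n p (cmpOf (Z ∘ ⇑e)) ∈ Tspan n p m :=
  Submodule.subset_span ⟨cmpOf Z, cmpOf (Z ∘ ⇑e), cmpOf_blocks_perm Z e h, hm, rfl⟩

lemma length_ge_left {q r : Composition n} {Z : (Fin r.length ×ₗ Fin q.length) → ℕ}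
    (hZ : Z ∈ MG q r) : r.length ≤ (cmpOf Z : Composition n).length := by
  rw [cmpOf_length Z (mg_sum hZ)]
  have hmarg := (mg_margins hZ).1
  have hrow : ∀ a : Fin r.length, ∃ b, Z (toLex (a, b)) ≠ 0 := by
    intro a
    have h1 : ∑ b, Z (toLex (a, b)) ≠ 0 := by
      rw [hmarg a]
      have := r.one_le_blocksFun a
      omega
    obtain ⟨b, _, hb⟩ := Finset.exists_ne_zero_of_sum_ne_zero h1
    exact ⟨b, hb⟩
  choose β hβ using hrow
  have := Finset.card_le_card_of_injOn (f := fun a => toLex (a, β a))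
    (s := (univ : Finset (Fin r.length)))
    (t := univ.filter (fun l => Z l ≠ 0))
    (fun a _ => Finset.mem_filter.2 ⟨mem_univ _, hβ a⟩)
    (by
      intro a _ a' _ haa
      exact congrArg (fun z => (ofLex z).1) haa)
  simpa using this

lemma length_pos_cmp (hn : 0 < n) (c : Composition n) : 1 ≤ c.length :=
  c.length_pos_of_pos hn

end TSPAN

section PRODUCTS

variable {p : ℕ}

lemma exists_row_ne_zero {q r : Composition n} {Z : (Fin r.length ×ₗ Fin q.length) → ℕ}
    (hm : margins q r Z) (a : Fin r.length) : ∃ b, Z (toLex (a, b)) ≠ 0 := by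
  have h1 : ∑ b, Z (toLex (a, b)) ≠ 0 := by
    rw [hm.1 a]
    have := r.one_le_blocksFun a
    omega
  obtain ⟨b, _, hb⟩ := Finset.exists_ne_zero_of_sum_ne_zero h1
  exact ⟨b, hb⟩

lemma cmpOf_eq_right {q r : Composition n} {Z : (Fin r.length ×ₗ Fin q.length) → ℕ}
    (hZ : Z ∈ MG q r) (hlen : (cmpOf Z : Composition n).length = r.length) :
    (cmpOf Z : Composition n) = r := by
  have hsum := mg_sum hZ
  have hm := mg_margins hZ
  have hcard : (univ.filter (fun l : Fin r.length ×ₗ Fin q.length => Z l ≠ 0)).card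
      = r.length := by
    rw [← cmpOf_length Z hsum, hlen]
  have hfiber : (univ.filter (fun l : Fin r.length ×ₗ Fin q.length => Z l ≠ 0)).card
      = ∑ a : Fin r.length,
        ((univ.filter (fun l : Fin r.length ×ₗ Fin q.length => Z l ≠ 0)).filter
          (fun l => (ofLex l).1 = a)).card :=
    Finset.card_eq_sum_card_fiberwise (fun l _ => mem_univ _)
  have hrowcard : ∀ a : Fin r.length,
      ((univ.filter (fun l : Fin r.length ×ₗ Fin q.length => Z l ≠ 0)).filter
        (fun l => (ofLex l).1 = a)).card
      = (univ.filter (fun b => Z (toLex (a, b)) ≠ 0)).card := by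
    intro a
    apply Finset.card_nbij (i := fun l => (ofLex l).2)
    · intro l hl
      obtain ⟨hl1, hl2⟩ := Finset.mem_filter.1 (Finset.mem_coe.1 hl)
      obtain ⟨-, hl3⟩ := Finset.mem_filter.1 hl1
      refine Finset.mem_coe.2 (Finset.mem_filter.2 ⟨mem_univ _, ?_⟩)
      have hrepr : l = toLex (a, (ofLex l).2) := by
        have h4 : ofLex l = (a, (ofLex l).2) := Prod.ext hl2 rfl
        calc l = toLex (ofLex l) := rfl
          _ = toLex ((a, (ofLex l).2) : Fin r.length × Fin q.length) := by rw [h4]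
      rwa [← hrepr]
    · intro l hl l' hl' hll
      obtain ⟨hl1, hl2⟩ := Finset.mem_filter.1 (Finset.mem_coe.1 hl)
      obtain ⟨hl1', hl2'⟩ := Finset.mem_filter.1 (Finset.mem_coe.1 hl')
      have : ofLex l = ofLex l' := Prod.ext (hl2.trans hl2'.symm) hll
      calc l = toLex (ofLex l) := rfl
        _ = toLex (ofLex l') := by rw [this]
        _ = l' := rfl
    · intro b hb
      obtain ⟨-, hb2⟩ := Finset.mem_filter.1 (Finset.mem_coe.1 hb)
      refine ⟨toLex (a, b), ?_, rfl⟩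
      refine Finset.mem_coe.2 (Finset.mem_filter.2 ⟨?_, rfl⟩)
      exact Finset.mem_filter.2 ⟨mem_univ _, hb2⟩
  have hone : ∀ a : Fin r.length, (univ.filter (fun b => Z (toLex (a, b)) ≠ 0)).card = 1 := by
    have hge : ∀ a ∈ (univ : Finset (Fin r.length)),
        1 ≤ (univ.filter (fun b => Z (toLex (a, b)) ≠ 0)).card := by
      intro a _
      rw [Nat.succ_le_iff, Finset.card_pos]
      obtain ⟨b, hb⟩ := exists_row_ne_zero hm a
      exact ⟨b, Finset.mem_filter.2 ⟨mem_univ _, hb⟩⟩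
    have hsum2 : ∑ a : Fin r.length, (univ.filter (fun b => Z (toLex (a, b)) ≠ 0)).card
        = r.length := by
      rw [← Finset.sum_congr rfl (fun a _ => (hrowcard a)), ← hfiber, hcard]
    have htot : ∑ _a : Fin r.length, 1
        = ∑ a : Fin r.length, (univ.filter (fun b => Z (toLex (a, b)) ≠ 0)).card := by
      rw [hsum2]
      simp
    intro a
    exact ((Finset.sum_eq_sum_iff_of_le hge).1 htot a (mem_univ a)).symm
  have hβ : ∀ a : Fin r.length, ∃ b, univ.filter (fun b => Z (toLex (a, b)) ≠ 0) = {b} :=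
    fun a => Finset.card_eq_one.1 (hone a)
  choose β hβ2 using hβ
  have hZβ : ∀ a b, Z (toLex (a, b)) ≠ 0 ↔ b = β a := by
    intro a b
    constructor
    · intro h
      have hmem : b ∈ univ.filter (fun b => Z (toLex (a, b)) ≠ 0) :=
        Finset.mem_filter.2 ⟨mem_univ _, h⟩
      rw [hβ2 a] at hmem
      exact Finset.mem_singleton.1 hmem
    · rintro rfl
      have hmem : β a ∈ ({β a} : Finset (Fin q.length)) := Finset.mem_singleton_self _
      rw [← hβ2 a] at hmem
      exact (Finset.mem_filter.1 hmem).2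
  have hrowval : ∀ a, Z (toLex (a, β a)) = r.blocksFun a := by
    intro a
    rw [← hm.1 a]
    symm
    apply Finset.sum_eq_single (β a)
    · intro b _ hb
      by_contra h
      exact hb ((hZβ a b).1 h)
    · intro h
      exact absurd (mem_univ _) h
  apply Composition.ext
  rw [cmpOf_blocks Z hsum]
  have key : cmpList Z
      = ((univ.sort (· ≤ ·)).filter (fun l : Fin r.length ×ₗ Fin q.length => Z l ≠ 0)).map Z := by
    unfold cmpList
    rw [List.filter_map]
    rfl
  have hsseq : (univ.sort (· ≤ ·)).filter (fun l : Fin r.length ×ₗ Fin q.length => Z l ≠ 0)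
      = (List.finRange r.length).map (fun a => toLex (a, β a)) := by
    haveI : IsAntisymm (Fin r.length ×ₗ Fin q.length) (· ≤ ·) := ⟨fun a b => le_antisymm⟩
    refine (fun hp h1 h2 => List.Perm.eq_of_pairwise' (r := (· ≤ ·)) h1 h2 hp) ?_ ?_ ?_
    · apply List.perm_of_nodup_nodup_toFinset_eq
      · exact (Finset.sort_nodup _ _).filter _
      · apply List.Nodup.map
        · intro a a' haa
          exact congrArg (fun z => (ofLex z).1) haa
        · exact List.nodup_finRange _
      · ext l
        rw [List.mem_toFinset, List.mem_toFinset, List.mem_filter, List.mem_map]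
        constructor
        · rintro ⟨-, hl⟩
          refine ⟨(ofLex l).1, List.mem_finRange _, ?_⟩
          have h1 : Z (toLex ((ofLex l).1, (ofLex l).2)) ≠ 0 := by simpa using hl
          have h2 := (hZβ _ _).1 h1
          calc toLex ((ofLex l).1, β (ofLex l).1) = toLex ((ofLex l).1, (ofLex l).2) := by rw [h2]
            _ = l := rfl
        · rintro ⟨a, -, rfl⟩
          refine ⟨(Finset.mem_sort _).2 (mem_univ _), ?_⟩
          simpa using (hZβ a (β a)).2 rfl
    · exact List.Pairwise.imp le_of_lt ((Finset.sortedLT_sort univ).pairwise.filter _)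
    · refine List.Pairwise.imp le_of_lt ?_
      apply List.Pairwise.map
      · intro a b hab
        rw [Prod.Lex.lt_iff]
        exact Or.inl hab
      · exact List.pairwise_lt_finRange _
  rw [key, hsseq, List.map_map]
  have hfun : (Z ∘ fun a => toLex (a, β a)) = r.blocksFun := funext hrowval
  rw [hfun, ← List.ofFn_eq_map, Composition.ofFn_blocksFun]

lemma comm_mem_T (hn : 0 < n) (q r : Composition n) :
    Bel n p q * Bel n p r - Bel n p r * Bel n p q ∈ Tspan n p 1 := by
  have hE : ∀ Z : (Fin r.length ×ₗ Fin q.length) → ℕ, margins q r Z →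
      margins r q (Z ∘ ⇑(swapE (Fin q.length) (Fin r.length))) := by
    intro Z hm
    exact ⟨fun a => hm.2 a, fun b => hm.1 b⟩
  have hE' : ∀ Z' : (Fin q.length ×ₗ Fin r.length) → ℕ, margins r q Z' →
      margins q r (Z' ∘ ⇑(swapE (Fin q.length) (Fin r.length)).symm) := by
    intro Z' hm
    exact ⟨fun a => hm.2 a, fun b => hm.1 b⟩
  rw [MSL q r, MSL r q,
    sum_MG_reindex (swapE (Fin q.length) (Fin r.length)) hE hE' (fun Z' => Bel n p (cmpOf Z')),
    ← Finset.sum_sub_distrib]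
  apply Submodule.sum_mem
  intro Z hZ
  exact bel_cmp_diff_mem Z _ (mg_sum hZ) (length_pos_cmp hn _)

lemma left_mul_mem_T (hn : 0 < n) (s q q' : Composition n) (hperm : q.blocks.Perm q'.blocks) :
    Bel n p s * Bel n p q - Bel n p s * Bel n p q' ∈ Tspan n p 1 := by
  obtain ⟨e, he⟩ := perm_blocksFun_equiv hperm
  have hE : ∀ Z : (Fin q.length ×ₗ Fin s.length) → ℕ, margins s q Z →
      margins s q' (Z ∘ ⇑(rowE (B := Fin s.length) e)) := by
    intro Z hm
    constructor
    · intro a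
      rw [← he a]
      exact hm.1 (e a)
    · intro b
      rw [← hm.2 b]
      exact Fintype.sum_equiv e _ _ (fun a => rfl)
  have hE' : ∀ Z' : (Fin q'.length ×ₗ Fin s.length) → ℕ, margins s q' Z' →
      margins s q (Z' ∘ ⇑(rowE (B := Fin s.length) e).symm) := by
    intro Z' hm
    constructor
    · intro a
      have h1 := hm.1 (e.symm a)
      have h2 : q'.blocksFun (e.symm a) = q.blocksFun a := by
        rw [← he (e.symm a), Equiv.apply_symm_apply]
      rw [h2] at h1
      exact h1
    · intro b
      rw [← hm.2 b]
      exact Fintype.sum_equiv e.symm _ _ (fun a => rfl)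
  rw [MSL s q, MSL s q',
    sum_MG_reindex (rowE e) hE hE' (fun Z' => Bel n p (cmpOf Z')),
    ← Finset.sum_sub_distrib]
  apply Submodule.sum_mem
  intro Z hZ
  exact bel_cmp_diff_mem Z _ (mg_sum hZ) (length_pos_cmp hn _)

lemma right_mul_mem_T (q q' r : Composition n) (hperm : q.blocks.Perm q'.blocks) :
    Bel n p q * Bel n p r - Bel n p q' * Bel n p r ∈ Tspan n p (r.length + 1) := by
  obtain ⟨e, he⟩ := perm_blocksFun_equiv hperm
  have hE : ∀ Z : (Fin r.length ×ₗ Fin q.length) → ℕ, margins q r Z →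
      margins q' r (Z ∘ ⇑(colE (A := Fin r.length) e)) := by
    intro Z hm
    constructor
    · intro a
      rw [← hm.1 a]
      exact Fintype.sum_equiv e _ _ (fun b => rfl)
    · intro b
      rw [← he b]
      exact hm.2 (e b)
  have hE' : ∀ Z' : (Fin r.length ×ₗ Fin q'.length) → ℕ, margins q' r Z' →
      margins q r (Z' ∘ ⇑(colE (A := Fin r.length) e).symm) := by
    intro Z' hm
    constructor
    · intro a
      rw [← hm.1 a]
      exact Fintype.sum_equiv e.symm _ _ (fun b => rfl)
    · intro b
      have h1 := hm.2 (e.symm b)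
      have h2 : q'.blocksFun (e.symm b) = q.blocksFun b := by
        rw [← he (e.symm b), Equiv.apply_symm_apply]
      rw [h2] at h1
      exact h1
  rw [MSL q r, MSL q' r,
    sum_MG_reindex (colE e) hE hE' (fun Z' => Bel n p (cmpOf Z')),
    ← Finset.sum_sub_distrib]
  apply Submodule.sum_mem
  intro Z hZ
  by_cases hlen : (cmpOf Z : Composition n).length = r.length
  · have h1 : (cmpOf Z : Composition n) = r := cmpOf_eq_right hZ hlen
    have hZ' : (Z ∘ ⇑(colE (A := Fin r.length) e)) ∈ MG q' r := mem_MG_reindex (colE e) hE hZ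
    have h2 : (cmpOf (Z ∘ ⇑(colE (A := Fin r.length) e)) : Composition n) = r :=
      cmpOf_eq_right hZ' (by rw [cmpOf_length_comp Z (colE e) (mg_sum hZ), hlen])
    rw [h1, h2, sub_self]
    exact zero_mem _
  · have hge := length_ge_left hZ
    refine bel_cmp_diff_mem Z _ (mg_sum hZ) ?_
    rw [cmpOf_length_comp Z (colE e) (mg_sum hZ)]
    omega

end PRODUCTS

section ENDGAME

variable {p : ℕ}

lemma bel_single (hn : 0 < n) : Bel n p (Composition.single n hn) = 1 := by
  rw [Bel]
  have hidx : ∀ i j : Fin (Composition.single n hn).length, i = j := by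
    intro i j
    apply Fin.ext
    have h1 := i.2
    have h2 := j.2
    have h3 := Composition.single_length hn
    omega
  have hset : (univ.filter (fun σ : Equiv.Perm (Fin n) =>
      descSet σ ⊆ properPartialSums (Composition.single n hn)))
      = {(1 : Equiv.Perm (Fin n))} := by
    ext σ
    simp only [mem_filter, mem_univ, true_and, Finset.mem_singleton]
    rw [descSet_subset_iff]
    constructor
    · intro h
      have hfib : ∀ (τ : Equiv.Perm (Fin n)) (l : Fin n), fib ⇑τ l = 1 := by
        intro τ l
        unfold fib
        apply Finset.card_eq_one.2
        refine ⟨τ.symm l, ?_⟩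
        ext v
        simp only [mem_filter, mem_univ, true_and, Finset.mem_singleton]
        constructor
        · intro hv; rw [← hv]; simp
        · rintro rfl; simp
      have hcoe : ⇑σ = ⇑(1 : Equiv.Perm (Fin n)) := by
        apply monotone_unique
        · exact fun v w hvw => by
            rcases eq_or_lt_of_le hvw with rfl | hlt
            · exact le_rfl
            · exact (h v w hlt (hidx _ _)).le
        · intro v w hvw
          simpa using hvw
        · funext l
          rw [hfib σ l, hfib 1 l]
      exact Equiv.coe_fn_injective hcoe
    · rintro rfl
      intro v w hvw _
      simpa using hvw
  rw [hset, Finset.sum_singleton, map_one]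

def Vspan (n p : ℕ) : Submodule (ZMod p) (MonoidAlgebra (ZMod p) (Equiv.Perm (Fin n))) :=
  Submodule.span (ZMod p) (Set.range (Bel n p))

lemma bel_mem_V (q : Composition n) : Bel n p q ∈ Vspan n p :=
  Submodule.subset_span ⟨q, rfl⟩

lemma one_mem_V (hn : 0 < n) : (1 : MonoidAlgebra (ZMod p) (Equiv.Perm (Fin n))) ∈ Vspan n p := by
  rw [← bel_single hn]
  exact bel_mem_V _

lemma V_mul_V {x y : MonoidAlgebra (ZMod p) (Equiv.Perm (Fin n))}
    (hx : x ∈ Vspan n p) (hy : y ∈ Vspan n p) : x * y ∈ Vspan n p := by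
  have hle : Vspan n p * Vspan n p ≤ Vspan n p := by
    rw [Vspan, Submodule.span_mul_span]
    apply Submodule.span_le.2
    rintro _ ⟨_, ⟨q, rfl⟩, _, ⟨r, rfl⟩, rfl⟩
    show Bel n p q * Bel n p r ∈ (Vspan n p : Set _)
    rw [MSL q r]
    exact Submodule.sum_mem _ (fun Z _ => bel_mem_V _)
  exact hle (Submodule.mul_mem_mul hx hy)

lemma comm_mem_T_of_V (hn : 0 < n) {x y : MonoidAlgebra (ZMod p) (Equiv.Perm (Fin n))}
    (hx : x ∈ Vspan n p) (hy : y ∈ Vspan n p) : x * y - y * x ∈ Tspan n p 1 := by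
  have step1 : ∀ q : Composition n, ∀ y ∈ Vspan n p,
      Bel n p q * y - y * Bel n p q ∈ Tspan n p 1 := by
    intro q y hy
    let U : Submodule (ZMod p) (MonoidAlgebra (ZMod p) (Equiv.Perm (Fin n))) :=
      { carrier := {y | Bel n p q * y - y * Bel n p q ∈ Tspan n p 1}
        add_mem' := by
          intro a b ha hb
          simp only [Set.mem_setOf_eq] at ha hb ⊢
          have h : Bel n p q * (a + b) - (a + b) * Bel n p q
              = (Bel n p q * a - a * Bel n p q) + (Bel n p q * b - b * Bel n p q) := by
            noncomm_ring
          rw [h]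
          exact Submodule.add_mem _ ha hb
        zero_mem' := by
          simp only [Set.mem_setOf_eq, mul_zero, zero_mul, sub_zero]
          exact Submodule.zero_mem _
        smul_mem' := by
          intro c a ha
          simp only [Set.mem_setOf_eq] at ha ⊢
          have h : Bel n p q * (c • a) - (c • a) * Bel n p q
              = c • (Bel n p q * a - a * Bel n p q) := by
            rw [mul_smul_comm, smul_mul_assoc, smul_sub]
          rw [h]
          exact Submodule.smul_mem _ c ha }
    have hle : Vspan n p ≤ U := by
      apply Submodule.span_le.2
      rintro _ ⟨r, rfl⟩
      exact comm_mem_T hn q r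
    exact hle hy
  let W : Submodule (ZMod p) (MonoidAlgebra (ZMod p) (Equiv.Perm (Fin n))) :=
    { carrier := {x | x * y - y * x ∈ Tspan n p 1}
      add_mem' := by
        intro a b ha hb
        simp only [Set.mem_setOf_eq] at ha hb ⊢
        have h : (a + b) * y - y * (a + b) = (a * y - y * a) + (b * y - y * b) := by
          noncomm_ring
        rw [h]
        exact Submodule.add_mem _ ha hb
      zero_mem' := by
        simp only [Set.mem_setOf_eq, mul_zero, zero_mul, sub_zero, zero_sub, neg_zero]
        exact Submodule.zero_mem _
      smul_mem' := by
        intro c a ha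
        simp only [Set.mem_setOf_eq] at ha ⊢
        have h : (c • a) * y - y * (c • a) = c • (a * y - y * a) := by
          rw [smul_mul_assoc, mul_smul_comm, smul_sub]
        rw [h]
        exact Submodule.smul_mem _ c ha }
  have hle : Vspan n p ≤ W := by
    apply Submodule.span_le.2
    rintro _ ⟨q, rfl⟩
    exact step1 q y hy
  exact hle hx

lemma V_mul_T (hn : 0 < n) {x t : MonoidAlgebra (ZMod p) (Equiv.Perm (Fin n))}
    (hx : x ∈ Vspan n p) (ht : t ∈ Tspan n p 1) : x * t ∈ Tspan n p 1 := by
  have step1 : ∀ s : Composition n, ∀ t ∈ Tspan n p 1, Bel n p s * t ∈ Tspan n p 1 := by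
    intro s t ht
    let U : Submodule (ZMod p) (MonoidAlgebra (ZMod p) (Equiv.Perm (Fin n))) :=
      { carrier := {t | Bel n p s * t ∈ Tspan n p 1}
        add_mem' := by
          intro a b ha hb
          simp only [Set.mem_setOf_eq, mul_add] at ha hb ⊢
          exact Submodule.add_mem _ ha hb
        zero_mem' := by
          simp only [Set.mem_setOf_eq, mul_zero]
          exact Submodule.zero_mem _
        smul_mem' := by
          intro c a ha
          simp only [Set.mem_setOf_eq, mul_smul_comm] at ha ⊢
          exact Submodule.smul_mem _ c ha }
    have hle : Tspan n p 1 ≤ U := by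
      apply Submodule.span_le.2
      rintro _ ⟨q, q', hperm, -, rfl⟩
      show Bel n p s * (Bel n p q - Bel n p q') ∈ Tspan n p 1
      rw [mul_sub]
      exact left_mul_mem_T hn s q q' hperm
    exact hle ht
  let W : Submodule (ZMod p) (MonoidAlgebra (ZMod p) (Equiv.Perm (Fin n))) :=
    { carrier := {x | x * t ∈ Tspan n p 1}
      add_mem' := by
        intro a b ha hb
        simp only [Set.mem_setOf_eq, add_mul] at ha hb ⊢
        exact Submodule.add_mem _ ha hb
      zero_mem' := by
        simp only [Set.mem_setOf_eq, zero_mul]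
        exact Submodule.zero_mem _
      smul_mem' := by
        intro c a ha
        simp only [Set.mem_setOf_eq, smul_mul_assoc] at ha ⊢
        exact Submodule.smul_mem _ c ha }
  have hle : Vspan n p ≤ W := by
    apply Submodule.span_le.2
    rintro _ ⟨s, rfl⟩
    exact step1 s t ht
  exact hle hx

lemma T_mul_Tk {k : ℕ} {z w : MonoidAlgebra (ZMod p) (Equiv.Perm (Fin n))}
    (hz : z ∈ Tspan n p 1) (hw : w ∈ Tspan n p k) : z * w ∈ Tspan n p (k + 1) := by
  have step1 : ∀ q q' : Composition n, q.blocks.Perm q'.blocks →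
      ∀ w ∈ Tspan n p k, (Bel n p q - Bel n p q') * w ∈ Tspan n p (k + 1) := by
    intro q q' hperm w hw
    let U : Submodule (ZMod p) (MonoidAlgebra (ZMod p) (Equiv.Perm (Fin n))) :=
      { carrier := {w | (Bel n p q - Bel n p q') * w ∈ Tspan n p (k + 1)}
        add_mem' := by
          intro a b ha hb
          simp only [Set.mem_setOf_eq, mul_add] at ha hb ⊢
          exact Submodule.add_mem _ ha hb
        zero_mem' := by
          simp only [Set.mem_setOf_eq, mul_zero]
          exact Submodule.zero_mem _
        smul_mem' := by
          intro c a ha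
          simp only [Set.mem_setOf_eq, mul_smul_comm] at ha ⊢
          exact Submodule.smul_mem _ c ha }
    have hle : Tspan n p k ≤ U := by
      apply Submodule.span_le.2
      rintro _ ⟨r, r', hperm2, hk, rfl⟩
      show (Bel n p q - Bel n p q') * (Bel n p r - Bel n p r') ∈ Tspan n p (k + 1)
      have hexp : (Bel n p q - Bel n p q') * (Bel n p r - Bel n p r')
          = (Bel n p q * Bel n p r - Bel n p q' * Bel n p r)
            - (Bel n p q * Bel n p r' - Bel n p q' * Bel n p r') := by
        noncomm_ring
      rw [hexp]
      have hlen : r.length = r'.length := by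
        rw [← Composition.blocks_length, ← Composition.blocks_length, hperm2.length_eq]
      apply Submodule.sub_mem
      · exact Tspan_antitone (by omega) (right_mul_mem_T q q' r hperm)
      · exact Tspan_antitone (by omega) (right_mul_mem_T q q' r' hperm)
    exact hle hw
  let W : Submodule (ZMod p) (MonoidAlgebra (ZMod p) (Equiv.Perm (Fin n))) :=
    { carrier := {z | z * w ∈ Tspan n p (k + 1)}
      add_mem' := by
        intro a b ha hb
        simp only [Set.mem_setOf_eq, add_mul] at ha hb ⊢
        exact Submodule.add_mem _ ha hb
      zero_mem' := by
        simp only [Set.mem_setOf_eq, zero_mul]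
        exact Submodule.zero_mem _
      smul_mem' := by
        intro c a ha
        simp only [Set.mem_setOf_eq, smul_mul_assoc] at ha ⊢
        exact Submodule.smul_mem _ c ha }
  have hle : Tspan n p 1 ≤ W := by
    apply Submodule.span_le.2
    rintro _ ⟨q, q', hperm, -, rfl⟩
    exact step1 q q' hperm w hw
  exact hle hz

lemma pow_mem_T {u : MonoidAlgebra (ZMod p) (Equiv.Perm (Fin n))}
    (hu : u ∈ Tspan n p 1) : ∀ k, u ^ (k + 1) ∈ Tspan n p (k + 1) := by
  intro k
  induction k with
  | zero => simpa using hu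
  | succ k ih =>
    rw [pow_succ']
    exact T_mul_Tk hu ih

lemma Tspan_eq_bot : Tspan n p (n + 1) = ⊥ := by
  rw [eq_bot_iff]
  apply Submodule.span_le.2
  rintro _ ⟨q, r, hperm, hm, rfl⟩
  have := r.length_le
  omega

end ENDGAME

end SolAux

/-- `Σ(n,p)/R(n,p)` is commutative: every commutator `xy - yx` lies in the
Jacobson radical `R(n,p)`. -/
theorem stmt6 (n p : ℕ) (hn : 1 ≤ n) (hp : p.Prime) :
    ∀ x y : descentAlgebra n p, x * y - y * x ∈ descentRadical n p := by
  intro x y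
  have hn0 : 0 < n := hn
  -- every element of the descent algebra lies in the span of the `Bel`s
  have hadj : ∀ z : descentAlgebra n p, (z : GroupAlg n p) ∈ SolAux.Vspan n p := by
    intro z
    have hle : descentAlgebra n p ≤
        (SolAux.Vspan n p).toSubalgebra (SolAux.one_mem_V hn0)
          (fun _ _ hx hy => SolAux.V_mul_V hx hy) := by
      apply Algebra.adjoin_le
      rintro _ ⟨q, rfl⟩
      exact SolAux.bel_mem_V q
    exact hle z.2
  -- the commutator lies in T
  have hzT : ((x * y - y * x : descentAlgebra n p) : GroupAlg n p) ∈ SolAux.Tspan n p 1 := by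
    have hcoe : ((x * y - y * x : descentAlgebra n p) : GroupAlg n p)
        = (x : GroupAlg n p) * (y : GroupAlg n p) - (y : GroupAlg n p) * (x : GroupAlg n p) := by
      rfl
    rw [hcoe]
    exact SolAux.comm_mem_T_of_V hn0 (hadj x) (hadj y)
  -- now show membership in every maximal ideal
  set z : descentAlgebra n p := x * y - y * x with hzdef
  show z ∈ descentRadical n p
  change z ∈ sInf {J : Ideal (descentAlgebra n p) | ⊥ ≤ J ∧ J.IsMaximal}
  rw [Submodule.mem_sInf]
  rintro J ⟨-, hJmax⟩
  by_contra hzJ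
  have hKtop : J ⊔ Ideal.span {z} = ⊤ := by
    apply hJmax.1.2
    refine lt_of_le_of_ne le_sup_left (fun hEq => hzJ ?_)
    have hz2 : z ∈ J ⊔ Ideal.span {z} :=
      Submodule.mem_sup_right (Ideal.subset_span (Set.mem_singleton z))
    rw [← hEq] at hz2
    exact hz2
  have h1K : (1 : descentAlgebra n p) ∈ J ⊔ Ideal.span {z} := by
    rw [hKtop]
    exact Submodule.mem_top
  obtain ⟨a, haJ, w, hw, hsum⟩ := Submodule.mem_sup.1 h1K
  obtain ⟨c, hc⟩ := Submodule.mem_span_singleton.1 hw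
  have ha_eq : a = 1 - c * z := by
    have h2 : a + c * z = 1 := by
      rw [← smul_eq_mul, hc, hsum]
    exact eq_sub_of_add_eq h2
  -- c * z is nilpotent
  have hcz : ((c * z : descentAlgebra n p) : GroupAlg n p) ∈ SolAux.Tspan n p 1 := by
    have hcoe : ((c * z : descentAlgebra n p) : GroupAlg n p)
        = (c : GroupAlg n p) * (z : GroupAlg n p) := rfl
    rw [hcoe]
    exact SolAux.V_mul_T hn0 (hadj c) hzT
  have hnil : IsNilpotent (c * z) := by
    refine ⟨n + 1, ?_⟩
    have hval : (((c * z) ^ (n + 1) : descentAlgebra n p) : GroupAlg n p) = 0 := by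
      rw [SubmonoidClass.coe_pow]
      have hpow := SolAux.pow_mem_T hcz n
      rw [SolAux.Tspan_eq_bot] at hpow
      simpa using hpow
    exact Subtype.coe_injective (by simpa using hval)
  have hunit : IsUnit a := by
    rw [ha_eq]
    exact hnil.isUnit_one_sub
  obtain ⟨binv, hbinv⟩ := hunit.exists_left_inv
  have h1J : (1 : descentAlgebra n p) ∈ J := by
    rw [← hbinv]
    exact Ideal.mul_mem_left J binv haJ
  exact hJmax.ne_top ((Ideal.eq_top_iff_one J).2 h1J)

end
end
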